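/- arXiv:2112.14979 — 8 statements merged into one kernel-verified Lean document; each statement's English description precedes it below -/
import Mathlib

section
/- Let E ⊆ ℝⁿ be bounded open with vol(E) = 1, let 𝓡 be a finite measurable partition of E with M elements such that vol(R) ≥ ε and diam(R) ≤ δ for every R ∈ 𝓡, and let X₁,…,X_N be i.i.d. uniform samples from E. Then the probability that the union of closed balls of radius δ centered at the samples covers E is at least 1 - M·exp(-ε·N). -/
open MeasureTheory Metric Set ProbabilityTheory
open scoped ENNReal

theorem good_partition_cover_prob {n : ℕ}
    (E : Set (EuclideanSpace ℝ (Fin n))) (hEopen : IsOpen E)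
    (hEbdd : Bornology.IsBounded E) (hE1 : volume E = 1)
    (ε δ : ℝ) (hε : 0 < ε) (hδ : 0 < δ)
    (𝓡 : Finset (Set (EuclideanSpace ℝ (Fin n)))) (M : ℕ) (hM : 𝓡.card = M)
    (hmeas : ∀ R ∈ 𝓡, MeasurableSet R)
    (hdisj : ∀ R ∈ 𝓡, ∀ R' ∈ 𝓡, R ≠ R' → Disjoint R R')
    (hcover : ⋃₀ (𝓡 : Set (Set (EuclideanSpace ℝ (Fin n)))) = E)
    (hvol : ∀ R ∈ 𝓡, ENNReal.ofReal ε ≤ volume R)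
    (hdiam : ∀ R ∈ 𝓡, Metric.diam R ≤ δ)
    {Ω : Type*} [MeasurableSpace Ω] (P : Measure Ω) [IsProbabilityMeasure P]
    (N : ℕ) (X : Fin N → Ω → EuclideanSpace ℝ (Fin n))
    (hindep : iIndepFun X P)
    (hunif : ∀ i, ∀ A : Set (EuclideanSpace ℝ (Fin n)), MeasurableSet A →
      P (X i ⁻¹' A) = volume (A ∩ E) / volume E) :
    1 - (M : ℝ≥0∞) * ENNReal.ofReal (Real.exp (-ε * N)) ≤
      P {ω | E ⊆ ⋃ i, Metric.closedBall (X i ω) δ} := by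
  classical
  set A := {ω | E ⊆ ⋃ i, Metric.closedBall (X i ω) δ} with hA
  have hRsub : ∀ R ∈ 𝓡, R ⊆ E := fun R hR => hcover ▸ subset_sUnion_of_mem hR
  -- probability that a given cell is missed by all samples
  have hmiss : ∀ R ∈ 𝓡, P (⋂ i, X i ⁻¹' Rᶜ) ≤ ENNReal.ofReal (Real.exp (-ε * N)) := by
    intro R hR
    have hmR := hmeas R hR
    have hprod : P (⋂ i, X i ⁻¹' Rᶜ) = ∏ i : Fin N, P (X i ⁻¹' Rᶜ) := by
      have := (iIndepFun_iff_measure_inter_preimage_eq_mul.mp hindep) Finset.univ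
        (sets := fun _ => Rᶜ) (fun i _ => hmR.compl)
      simpa using this
    have hone : ∀ i : Fin N, P (X i ⁻¹' Rᶜ) ≤ ENNReal.ofReal (Real.exp (-ε)) := by
      intro i
      rw [hunif i _ hmR.compl, hE1, div_one]
      have hcompl : Rᶜ ∩ E = E \ R := by ext x; simp [Set.mem_diff, and_comm]
      have hRfin : volume R ≠ ∞ := by
        refine ne_of_lt (lt_of_le_of_lt (measure_mono (hRsub R hR)) ?_)
        rw [hE1]; exact ENNReal.one_lt_top
      rw [hcompl, measure_diff (hRsub R hR) hmR.nullMeasurableSet hRfin, hE1]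
      calc 1 - volume R ≤ 1 - ENNReal.ofReal ε := tsub_le_tsub_left (hvol R hR) 1
        _ = ENNReal.ofReal (1 - ε) := by
            rw [ENNReal.ofReal_sub 1 hε.le, ENNReal.ofReal_one]
        _ ≤ ENNReal.ofReal (Real.exp (-ε)) := by
            apply ENNReal.ofReal_le_ofReal
            linarith [Real.add_one_le_exp (-ε)]
    calc P (⋂ i, X i ⁻¹' Rᶜ) = ∏ i : Fin N, P (X i ⁻¹' Rᶜ) := hprod
      _ ≤ ∏ _i : Fin N, ENNReal.ofReal (Real.exp (-ε)) :=
          Finset.prod_le_prod' fun i _ => hone i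
      _ = ENNReal.ofReal (Real.exp (-ε)) ^ N := by simp
      _ = ENNReal.ofReal (Real.exp (-ε) ^ N) := by
          rw [ENNReal.ofReal_pow (Real.exp_nonneg _)]
      _ = ENNReal.ofReal (Real.exp (-ε * N)) := by
          rw [← Real.exp_nat_mul]; ring_nf
  -- not covering implies some cell is missed
  have hsub : Aᶜ ⊆ ⋃ R ∈ 𝓡, ⋂ i, X i ⁻¹' Rᶜ := by
    intro ω hω
    simp only [hA, mem_compl_iff, mem_setOf_eq, Set.not_subset] at hω
    obtain ⟨x, hxE, hxball⟩ := hω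
    obtain ⟨R, hR, hxR⟩ : ∃ R ∈ 𝓡, x ∈ R := by
      have : x ∈ ⋃₀ (𝓡 : Set (Set (EuclideanSpace ℝ (Fin n)))) := hcover ▸ hxE
      simpa using this
    refine mem_iUnion₂.mpr ⟨R, hR, mem_iInter.mpr fun i hXi => ?_⟩
    apply hxball
    refine mem_iUnion.mpr ⟨i, mem_closedBall.mpr ?_⟩
    exact (Metric.dist_le_diam_of_mem (hEbdd.subset (hRsub R hR)) hxR hXi).trans
      (hdiam R hR)
  have hAc : P Aᶜ ≤ (M : ℝ≥0∞) * ENNReal.ofReal (Real.exp (-ε * N)) := by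
    calc P Aᶜ ≤ P (⋃ R ∈ 𝓡, ⋂ i, X i ⁻¹' Rᶜ) := measure_mono hsub
      _ ≤ ∑ R ∈ 𝓡, P (⋂ i, X i ⁻¹' Rᶜ) := measure_biUnion_finset_le _ _
      _ ≤ ∑ _R ∈ 𝓡, ENNReal.ofReal (Real.exp (-ε * N)) := Finset.sum_le_sum hmiss
      _ = (M : ℝ≥0∞) * ENNReal.ofReal (Real.exp (-ε * N)) := by
          rw [Finset.sum_const, hM, nsmul_eq_mul]
  calc 1 - (M : ℝ≥0∞) * ENNReal.ofReal (Real.exp (-ε * N))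
      ≤ 1 - P Aᶜ := tsub_le_tsub_left hAc 1
    _ ≤ P A := by
        rw [tsub_le_iff_right]
        calc (1 : ℝ≥0∞) = P Set.univ := measure_univ.symm
          _ = P (A ∪ Aᶜ) := by rw [Set.union_compl_self]
          _ ≤ P A + P Aᶜ := measure_union_le _ _
end

section
/- Let E be a bounded open subset of ℝⁿ such that reach(Eᶜ) > ρ > 0. Then for every 0 < δ < ρ there exists a finite measurable partition 𝓡 of E such that vol(R) ≥ δⁿ/n^{n/2} and diam(R) ≤ 3δ for all R ∈ 𝓡. -/
open MeasureTheory Metric Set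
open scoped ENNReal
open Filter Topology
open scoped RealInnerProductSpace

/-- The set of points having a unique nearest point in `A`. -/
def Unp {n : ℕ} (A : Set (EuclideanSpace ℝ (Fin n))) : Set (EuclideanSpace ℝ (Fin n)) :=
  {x | ∃! a, a ∈ A ∧ dist x a = Metric.infDist x A}

/-- Federer's reach of `A` at a point `a`. -/
noncomputable def reachAt {n : ℕ} (A : Set (EuclideanSpace ℝ (Fin n)))
    (a : EuclideanSpace ℝ (Fin n)) : ℝ≥0∞ :=
  sSup {r : ℝ≥0∞ | EMetric.ball a r ⊆ Unp A}

/-- Federer's reach of `A`. -/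
noncomputable def reach {n : ℕ} (A : Set (EuclideanSpace ℝ (Fin n))) : ℝ≥0∞ :=
  ⨅ a ∈ A, reachAt A a

section Aux
variable {n : ℕ} {E : Set (EuclideanSpace ℝ (Fin n))}

lemma mem_unp_of_infDist_lt {ρ : ℝ} (hreach : ENNReal.ofReal ρ < reach Eᶜ)
    (hclosed : IsClosed Eᶜ) (hne : Eᶜ.Nonempty)
    {x : EuclideanSpace ℝ (Fin n)} (hx : infDist x Eᶜ < ρ) : x ∈ Unp Eᶜ := by
  obtain ⟨b, hbmem, hbd⟩ := hclosed.exists_infDist_eq_dist hne x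
  have h1 : ENNReal.ofReal ρ < reachAt Eᶜ b :=
    lt_of_lt_of_le hreach (iInf₂_le b hbmem)
  obtain ⟨r, hrmem, hrlt⟩ := lt_sSup_iff.mp h1
  refine hrmem ?_
  have hdb : dist x b < ρ := by rw [hbd] at hx; exact hx
  show edist x b < r
  calc edist x b = ENNReal.ofReal (dist x b) := edist_dist x b
    _ < ENNReal.ofReal ρ := by
        exact (ENNReal.ofReal_lt_ofReal_iff (lt_of_le_of_lt dist_nonneg hdb)).mpr hdb
    _ < r := hrlt

lemma sq_infDist_ge {A : Set (EuclideanSpace ℝ (Fin n))}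
    {x h b : EuclideanSpace ℝ (Fin n)} (hb : b ∈ A)
    (hbd : dist (x + h) b = infDist (x + h) A) :
    infDist x A ^ 2 + 2 * ⟪x - b, h⟫ + ‖h‖ ^ 2 ≤ infDist (x + h) A ^ 2 := by
  have h1 : infDist x A ≤ ‖x - b‖ := by
    rw [← dist_eq_norm]; exact infDist_le_dist_of_mem hb
  have h2 : infDist x A ^ 2 ≤ ‖x - b‖ ^ 2 :=
    pow_le_pow_left₀ (infDist_nonneg) h1 2
  have h3 : x - b = (x + h - b) - h := by abel
  have h4 : ‖x - b‖ ^ 2 = ‖x + h - b‖ ^ 2 - 2 * ⟪x + h - b, h⟫ + ‖h‖ ^ 2 := by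
    rw [h3]; exact norm_sub_sq_real _ _
  have h5 : ⟪x + h - b, h⟫ = ⟪x - b, h⟫ + ‖h‖ ^ 2 := by
    have : x + h - b = (x - b) + h := by abel
    rw [this, inner_add_left, real_inner_self_eq_norm_sq]
  have h6 : ‖x + h - b‖ = infDist (x + h) A := by rw [← dist_eq_norm, hbd]
  have h7 : ‖x + h - b‖ ^ 2 = infDist (x + h) A ^ 2 := by rw [h6]
  linarith [h2, h4, h5, h7]

set_option maxHeartbeats 1000000 in
lemma proj_semicontinuous (hclosed : IsClosed Eᶜ) (hne : Eᶜ.Nonempty)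
    {x a : EuclideanSpace ℝ (Fin n)}
    (hunique : ∀ b, b ∈ Eᶜ → dist x b = infDist x Eᶜ → b = a)
    (u : EuclideanSpace ℝ (Fin n)) (hu : ‖u‖ ≤ 1)
    {ε : ℝ} (hε : 0 < ε) {s₀ : ℝ} (hs₀ : 0 < s₀) :
    ∃ s, 0 < s ∧ s ≤ s₀ ∧ ∀ b, b ∈ Eᶜ →
      dist (x + s • u) b = infDist (x + s • u) Eᶜ → dist a b ≤ ε := by
  by_contra hcon
  push_neg at hcon
  -- for each j pick a bad nearest point
  have hstep : ∀ j : ℕ, ∃ b, b ∈ Eᶜ ∧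
      dist (x + (s₀ / (j + 1)) • u) b = infDist (x + (s₀ / (j + 1)) • u) Eᶜ ∧
      ε < dist a b := by
    intro j
    have hsj : 0 < s₀ / ((j : ℝ) + 1) := by positivity
    obtain ⟨b, hb1, hb2, hb3⟩ := hcon (s₀ / ((j : ℝ) + 1)) hsj
      (by
        have h1 : (1 : ℝ) ≤ (j : ℝ) + 1 := by
          have := Nat.cast_nonneg (α := ℝ) j; linarith
        calc s₀ / ((j : ℝ) + 1) ≤ s₀ / 1 := by
              apply div_le_div_of_nonneg_left (le_of_lt hs₀) one_pos h1
          _ = s₀ := by ring)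
    exact ⟨b, hb1, hb2, hb3⟩
  choose b hbmem hbnear hbfar using hstep
  set T : ℕ → ℝ := fun j => s₀ / ((j : ℝ) + 1) with hT
  have hTpos : ∀ j, 0 < T j := fun j => by positivity
  have hTle : ∀ j, T j ≤ s₀ := by
    intro j
    have h1 : (1 : ℝ) ≤ (j : ℝ) + 1 := by
      have := Nat.cast_nonneg (α := ℝ) j; linarith
    calc T j ≤ s₀ / 1 := div_le_div_of_nonneg_left (le_of_lt hs₀) one_pos h1
      _ = s₀ := by ring
  have hT0 : Tendsto T atTop (𝓝 0) := by
    have : Tendsto (fun j : ℕ => ((j : ℝ) + 1)) atTop atTop :=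
      tendsto_natCast_atTop_atTop.atTop_add tendsto_const_nhds
    simpa [hT] using Tendsto.div_atTop (tendsto_const_nhds (x := s₀)) this
  -- boundedness
  have hbd : ∀ j, b j ∈ closedBall x (2 * s₀ + infDist x Eᶜ) := by
    intro j
    have h1 : dist x (x + T j • u) ≤ T j := by
      rw [dist_self_add_right]
      calc ‖T j • u‖ = |T j| * ‖u‖ := by rw [norm_smul, Real.norm_eq_abs]
        _ ≤ T j * 1 := by
            rw [abs_of_pos (hTpos j)]
            exact mul_le_mul_of_nonneg_left hu (le_of_lt (hTpos j))
        _ = T j := by ring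
    have h2 : dist x (b j) ≤ 2 * T j + infDist x Eᶜ := by
      have hA : dist (x + T j • u) (b j) = infDist (x + T j • u) Eᶜ := hbnear j
      have hB : infDist (x + T j • u) Eᶜ ≤ infDist x Eᶜ + dist (x + T j • u) x :=
        infDist_le_infDist_add_dist
      have hC : dist (x + T j • u) x ≤ T j := by rw [dist_comm]; exact h1
      calc dist x (b j) ≤ dist x (x + T j • u) + dist (x + T j • u) (b j) := dist_triangle _ _ _
        _ ≤ T j + (infDist x Eᶜ + T j) := by rw [hA]; linarith
        _ = 2 * T j + infDist x Eᶜ := by ring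
    have h3 : 2 * T j + infDist x Eᶜ ≤ 2 * s₀ + infDist x Eᶜ := by
      have := hTle j; linarith
    rw [mem_closedBall, dist_comm]
    linarith
  obtain ⟨c, -, φ, hφmono, hφtend⟩ :=
    tendsto_subseq_of_bounded (isBounded_closedBall
      (x := x) (r := 2 * s₀ + infDist x Eᶜ)) hbd
  have hcmem : c ∈ Eᶜ := hclosed.mem_of_tendsto hφtend
    (Filter.Eventually.of_forall fun j => hbmem (φ j))
  have htendT : Tendsto (fun j => T (φ j)) atTop (𝓝 0) :=
    hT0.comp hφmono.tendsto_atTop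
  have htend1 : Tendsto (fun j => dist x (b (φ j))) atTop (𝓝 (dist x c)) :=
    Tendsto.dist tendsto_const_nhds hφtend
  have hdj : ∀ j, dist x (b (φ j)) ≤ infDist x Eᶜ + 2 * T (φ j) := by
    intro j
    have h1 : dist x (x + T (φ j) • u) ≤ T (φ j) := by
      rw [dist_self_add_right]
      calc ‖T (φ j) • u‖ = |T (φ j)| * ‖u‖ := by rw [norm_smul, Real.norm_eq_abs]
        _ ≤ T (φ j) * 1 := by
            rw [abs_of_pos (hTpos (φ j))]
            exact mul_le_mul_of_nonneg_left hu (le_of_lt (hTpos (φ j)))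
        _ = T (φ j) := by ring
    have hA : dist (x + T (φ j) • u) (b (φ j)) = infDist (x + T (φ j) • u) Eᶜ := hbnear (φ j)
    have hB : infDist (x + T (φ j) • u) Eᶜ ≤ infDist x Eᶜ + dist (x + T (φ j) • u) x :=
      infDist_le_infDist_add_dist
    have hC : dist (x + T (φ j) • u) x ≤ T (φ j) := by rw [dist_comm]; exact h1
    calc dist x (b (φ j)) ≤ dist x (x + T (φ j) • u) + dist (x + T (φ j) • u) (b (φ j)) :=
          dist_triangle _ _ _
      _ ≤ T (φ j) + (infDist x Eᶜ + T (φ j)) := by rw [hA]; linarith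
      _ = infDist x Eᶜ + 2 * T (φ j) := by ring
  have htend2 : Tendsto (fun j => infDist x Eᶜ + 2 * T (φ j)) atTop (𝓝 (infDist x Eᶜ + 2 * 0)) :=
    tendsto_const_nhds.add (htendT.const_mul 2)
  have hle : dist x c ≤ infDist x Eᶜ := by
    have := le_of_tendsto_of_tendsto' htend1 htend2 hdj
    linarith
  have hdistc : dist x c = infDist x Eᶜ :=
    le_antisymm hle (infDist_le_dist_of_mem hcmem)
  have hca : c = a := hunique c hcmem hdistc
  have htend3 : Tendsto (fun j => dist a (b (φ j))) atTop (𝓝 (dist a c)) :=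
    Tendsto.dist tendsto_const_nhds hφtend
  have hεle : ε ≤ dist a c :=
    ge_of_tendsto htend3 (Filter.Eventually.of_forall fun j => le_of_lt (hbfar (φ j)))
  rw [hca, dist_self] at hεle
  linarith



set_option maxHeartbeats 1000000 in
lemma escape (hEopen : IsOpen E) (hne : Eᶜ.Nonempty)
    {ρ δ : ℝ} (hreach : ENNReal.ofReal ρ < reach Eᶜ) (hδ0 : 0 < δ) (hδρ : δ < ρ)
    {p : EuclideanSpace ℝ (Fin n)} (hp0 : 0 < infDist p Eᶜ) (hpδ : infDist p Eᶜ ≤ δ) :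
    ∃ y, δ ≤ infDist y Eᶜ ∧ dist p y < δ := by
  have hclosed : IsClosed Eᶜ := hEopen.isClosed_compl
  obtain ⟨d₀, hd₀⟩ : ∃ d : ℝ, d = infDist p Eᶜ := ⟨_, rfl⟩
  have hp0' : 0 < d₀ := hd₀ ▸ hp0
  have hpδ' : d₀ ≤ δ := hd₀ ▸ hpδ
  obtain ⟨lam, hlam⟩ : ∃ l : ℝ, l = 1 - d₀ / (2 * δ) := ⟨_, rfl⟩
  have hlam1 : lam < 1 := by
    have : 0 < d₀ / (2 * δ) := by positivity
    rw [hlam]; linarith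
  have hlam0 : 1 / 2 ≤ lam := by
    have h1 : d₀ / (2 * δ) ≤ 1 / 2 := by
      rw [div_le_div_iff₀ (by positivity) (by norm_num)]
      linarith
    rw [hlam]; linarith
  have hlampos : 0 < lam := by linarith
  have hlamδ : lam * δ = δ - d₀ / 2 := by
    rw [hlam]; field_simp
  set F : EuclideanSpace ℝ (Fin n) → ℝ :=
    fun x => min (infDist x Eᶜ) δ - lam * dist x p with hF
  have hFcont : Continuous F := by
    apply Continuous.sub
    · exact (continuous_infDist_pt Eᶜ).min continuous_const
    · exact continuous_const.mul (continuous_id.dist continuous_const)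
  obtain ⟨xs, hxsK, hmax⟩ := (isCompact_closedBall p δ).exists_isMaxOn
    ⟨p, mem_closedBall_self (le_of_lt hδ0)⟩ hFcont.continuousOn
  have hFp : d₀ ≤ F xs := by
    have h1 : F p = d₀ := by
      rw [hF]; simp only [dist_self, mul_zero, sub_zero]
      rw [min_eq_left hpδ]; exact hd₀.symm
    rw [← h1]
    exact hmax (mem_closedBall_self (le_of_lt hδ0))
  have hdistxs : lam * dist xs p ≤ min (infDist xs Eᶜ) δ - d₀ := by
    have := hFp; rw [hF] at this; simp only at this; linarith
  have hdistlt : dist xs p < δ := by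
    by_contra hge
    push_neg at hge
    have h1 : lam * δ ≤ lam * dist xs p :=
      mul_le_mul_of_nonneg_left hge (le_of_lt hlampos)
    have h2 : min (infDist xs Eᶜ) δ ≤ δ := min_le_right _ _
    linarith
  by_cases hcase : δ ≤ infDist xs Eᶜ
  · exact ⟨xs, hcase, by rw [dist_comm]; exact hdistlt⟩
  push_neg at hcase
  exfalso
  obtain ⟨ds, hds⟩ : ∃ d : ℝ, d = infDist xs Eᶜ := ⟨_, rfl⟩
  have hcase' : ds < δ := hds ▸ hcase
  have hminds : min (infDist xs Eᶜ) δ = ds := by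
    rw [← hds]; exact min_eq_left (le_of_lt hcase')
  have hds0 : 0 < ds := by
    have : 0 ≤ lam * dist xs p := by positivity
    rw [hminds] at hdistxs
    linarith
  have hxsUnp : xs ∈ Unp Eᶜ := mem_unp_of_infDist_lt hreach hclosed hne
    (lt_trans hcase hδρ)
  obtain ⟨as, ⟨hasmem, hasd⟩, hasuniq⟩ := hxsUnp
  have hnorm_xa : ‖xs - as‖ = ds := by rw [← dist_eq_norm, hasd, hds]
  set u := (ds)⁻¹ • (xs - as) with hu
  have hunorm : ‖u‖ = 1 := by
    rw [hu, norm_smul, Real.norm_eq_abs, abs_of_pos (by positivity), hnorm_xa]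
    field_simp
  obtain ⟨ε, hε⟩ : ∃ e : ℝ, e = (1 - lam) * ds / 2 := ⟨_, rfl⟩
  have hεpos : 0 < ε := by
    rw [hε]; have : 0 < 1 - lam := by linarith
    positivity
  have hε2 : 2 * ε = (1 - lam) * ds := by rw [hε]; ring
  obtain ⟨s₀, hs₀⟩ : ∃ t : ℝ, t = min (δ - ds) (δ - dist xs p) := ⟨_, rfl⟩
  have hs₀pos : 0 < s₀ := by
    rw [hs₀]; apply lt_min <;> linarith
  obtain ⟨s, hspos, hsle, hskey⟩ := proj_semicontinuous hclosed hne
    (fun b hb hbd => hasuniq b ⟨hb, hbd⟩) u (le_of_eq hunorm) hεpos hs₀pos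
  set x' := xs + s • u with hx'
  obtain ⟨b', hb'mem, hb'd⟩ := hclosed.exists_infDist_eq_dist hne x'
  have hb'near : dist x' b' = infDist x' Eᶜ := hb'd.symm
  have hb'close : dist as b' ≤ ε := hskey b' hb'mem hb'near
  have hkey : ds ^ 2 + 2 * (s * (ds - ε)) + s ^ 2 ≤ infDist x' Eᶜ ^ 2 := by
    have h1 := sq_infDist_ge (x := xs) (h := s • u) hb'mem (by rw [← hx', hb'near])
    have h2 : ⟪xs - b', s • u⟫ = s * ⟪xs - b', u⟫ := real_inner_smul_right _ _ _
    have h3 : ⟪xs - b', u⟫ = ⟪xs - as, u⟫ + ⟪as - b', u⟫ := by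
      rw [← inner_add_left]; norm_num
    have h4 : ⟪xs - as, u⟫ = ds := by
      rw [hu, real_inner_smul_right, real_inner_self_eq_norm_sq, hnorm_xa]
      field_simp
    have h5 : -ε ≤ ⟪as - b', u⟫ := by
      have habs : |⟪as - b', u⟫| ≤ ‖as - b'‖ * ‖u‖ := abs_real_inner_le_norm _ _
      have hd : ‖as - b'‖ = dist as b' := (dist_eq_norm _ _).symm
      rw [hunorm, mul_one, hd] at habs
      have := abs_le.mp habs
      linarith [this.1]
    have h6 : ‖s • u‖ = s := by
      rw [norm_smul, Real.norm_eq_abs, abs_of_pos hspos, hunorm, mul_one]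
    have h7 : s * (ds - ε) ≤ ⟪xs - b', s • u⟫ := by
      rw [h2, h3, h4]
      have : ds - ε ≤ ds + ⟪as - b', u⟫ := by linarith
      exact mul_le_mul_of_nonneg_left this (le_of_lt hspos)
    have h8 : infDist xs Eᶜ ^ 2 = ds ^ 2 := by rw [hds]
    rw [h6] at h1
    linarith
  have hd'gt : ds + lam * s < infDist x' Eᶜ := by
    have h1lam : 0 < 1 - lam := by linarith
    have hcomp : (ds + lam * s) ^ 2 < ds ^ 2 + 2 * (s * (ds - ε)) + s ^ 2 := by
      nlinarith [mul_pos (mul_pos hspos hds0) h1lam,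
        mul_nonneg (mul_nonneg (le_of_lt hspos) (le_of_lt hspos))
          (mul_nonneg (le_of_lt h1lam) (by linarith : (0:ℝ) ≤ 1 + lam))]
    have hsq : (ds + lam * s) ^ 2 < infDist x' Eᶜ ^ 2 := lt_of_lt_of_le hcomp hkey
    exact lt_of_pow_lt_pow_left₀ 2 infDist_nonneg hsq
  have hsd : s ≤ δ - ds := le_trans hsle (by rw [hs₀]; exact min_le_left _ _)
  have hsm : s ≤ δ - dist xs p := le_trans hsle (by rw [hs₀]; exact min_le_right _ _)
  have hdx'xs : dist x' xs ≤ s := by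
    rw [hx', dist_comm, dist_self_add_right, norm_smul, Real.norm_eq_abs,
      abs_of_pos hspos, hunorm, mul_one]
  have hdistx' : dist x' p ≤ dist xs p + s := by
    calc dist x' p ≤ dist x' xs + dist xs p := dist_triangle _ _ _
      _ ≤ s + dist xs p := by linarith
      _ = dist xs p + s := by ring
  have hx'K : x' ∈ closedBall p δ := by
    rw [mem_closedBall]
    linarith
  have hd'le : infDist x' Eᶜ ≤ ds + s := by
    have h1 : infDist x' Eᶜ ≤ infDist xs Eᶜ + dist x' xs := infDist_le_infDist_add_dist
    rw [← hds] at h1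
    linarith
  have hFx' : F xs < F x' := by
    rw [hF]
    simp only
    have hmin' : min (infDist x' Eᶜ) δ = infDist x' Eᶜ := min_eq_left (by linarith)
    rw [hmin', hminds]
    have h9 : lam * dist x' p ≤ lam * (dist xs p + s) :=
      mul_le_mul_of_nonneg_left hdistx' (le_of_lt hlampos)
    have hexp : lam * (dist xs p + s) = lam * dist xs p + lam * s := by ring
    linarith
  exact absurd (hmax hx'K) (not_le.mpr hFx')

end Aux

section Cubes
variable {n : ℕ}

/-- Half-open grid cube with side `s`, indexed by `k : Fin n → ℤ`. -/
def gridCube (s : ℝ) (k : Fin n → ℤ) : Set (EuclideanSpace ℝ (Fin n)) :=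
  {x | ∀ i, (k i : ℝ) * s ≤ x i ∧ x i < ((k i : ℝ) + 1) * s}

lemma gridCube_eq_preimage (s : ℝ) (k : Fin n → ℤ) :
    gridCube s k = (MeasurableEquiv.toLp 2 (Fin n → ℝ)).symm ⁻¹'
      (Set.univ.pi fun i => Set.Ico ((k i : ℝ) * s) (((k i : ℝ) + 1) * s)) := by
  ext x
  simp only [gridCube, Set.mem_setOf_eq, Set.mem_preimage, Set.mem_pi, Set.mem_univ,
    Set.mem_Ico, forall_true_left]
  exact Iff.rfl

lemma gridCube_measurableSet (s : ℝ) (k : Fin n → ℤ) : MeasurableSet (gridCube s k) := by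
  rw [gridCube_eq_preimage]
  exact (MeasurableEquiv.toLp 2 (Fin n → ℝ)).symm.measurable
    (MeasurableSet.univ_pi fun i => measurableSet_Ico)

lemma gridCube_volume {s : ℝ} (hs : 0 ≤ s) (k : Fin n → ℤ) :
    volume (gridCube s k) = ENNReal.ofReal s ^ n := by
  rw [gridCube_eq_preimage]
  rw [(EuclideanSpace.volume_preserving_symm_measurableEquiv_toLp (Fin n)).measure_preimage
    (MeasurableSet.univ_pi fun i => measurableSet_Ico).nullMeasurableSet]
  rw [volume_pi_pi]
  have h1 : ∀ i : Fin n, volume (Set.Ico ((k i : ℝ) * s) (((k i : ℝ) + 1) * s))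
      = ENNReal.ofReal s := by
    intro i
    rw [Real.volume_Ico]
    congr 1
    ring
  simp only [h1, Finset.prod_const, Finset.card_univ, Fintype.card_fin]

lemma mem_gridCube_floor {s : ℝ} (hs : 0 < s) (x : EuclideanSpace ℝ (Fin n)) :
    x ∈ gridCube s (fun i => ⌊x i / s⌋) := by
  intro i
  constructor
  · have h := Int.floor_le (x i / s)
    calc ((⌊x i / s⌋ : ℝ)) * s ≤ (x i / s) * s := mul_le_mul_of_nonneg_right h (le_of_lt hs)
      _ = x i := by field_simp
  · have h := Int.lt_floor_add_one (x i / s)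
    calc x i = (x i / s) * s := by field_simp
      _ < ((⌊x i / s⌋ : ℝ) + 1) * s := by
          apply mul_lt_mul_of_pos_right h hs

lemma eq_floor_of_mem_gridCube {s : ℝ} (hs : 0 < s) {x : EuclideanSpace ℝ (Fin n)}
    {k : Fin n → ℤ} (h : x ∈ gridCube s k) : k = fun i => ⌊x i / s⌋ := by
  funext i
  obtain ⟨h1, h2⟩ := h i
  symm
  rw [Int.floor_eq_iff]
  constructor
  · rw [le_div_iff₀ hs]; exact h1
  · rw [div_lt_iff₀ hs]; push_cast; exact h2

lemma gridCube_disjoint {s : ℝ} (hs : 0 < s) {k k' : Fin n → ℤ} (h : k ≠ k') :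
    Disjoint (gridCube s k) (gridCube s k') := by
  rw [Set.disjoint_left]
  intro x hx hx'
  exact h ((eq_floor_of_mem_gridCube hs hx).trans (eq_floor_of_mem_gridCube hs hx').symm)

lemma gridCube_nonempty {s : ℝ} (hs : 0 < s) (k : Fin n → ℤ) :
    (gridCube s k).Nonempty := by
  refine ⟨(MeasurableEquiv.toLp 2 (Fin n → ℝ)).symm.symm (fun i => (k i : ℝ) * s), ?_⟩
  intro i
  have happ : ((MeasurableEquiv.toLp 2 (Fin n → ℝ)).symm.symm
      (fun i => (k i : ℝ) * s) : EuclideanSpace ℝ (Fin n)) i = (k i : ℝ) * s := rfl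
  rw [happ]
  exact ⟨le_refl _, by nlinarith⟩

lemma dist_lt_of_mem_gridCube (hn : 0 < n) {s : ℝ} (hs : 0 < s)
    {k : Fin n → ℤ} {x y : EuclideanSpace ℝ (Fin n)}
    (hx : x ∈ gridCube s k) (hy : y ∈ gridCube s k) :
    dist x y < s * Real.sqrt n := by
  have hterm : ∀ i : Fin n, dist (x i) (y i) ^ 2 < s ^ 2 := by
    intro i
    obtain ⟨hx1, hx2⟩ := hx i
    obtain ⟨hy1, hy2⟩ := hy i
    rw [Real.dist_eq]
    have h1 : |x i - y i| < s := by
      rw [abs_lt]; constructor <;> nlinarith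
    calc |x i - y i| ^ 2 = |x i - y i| * |x i - y i| := sq (|x i - y i|) ▸ by ring
      _ < s * s := by
          apply mul_lt_mul' (le_of_lt h1) h1 (abs_nonneg _) hs
      _ = s ^ 2 := by ring
  have hsum : (∑ i : Fin n, dist (x i) (y i) ^ 2) < ∑ _i : Fin n, s ^ 2 := by
    have : Nonempty (Fin n) := Fin.pos_iff_nonempty.mp hn
    exact Finset.sum_lt_sum_of_nonempty Finset.univ_nonempty (fun i _ => hterm i)
  have hsum2 : (∑ _i : Fin n, s ^ 2 : ℝ) = n * s ^ 2 := by
    rw [Finset.sum_const, Finset.card_univ, Fintype.card_fin, nsmul_eq_mul]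
  rw [EuclideanSpace.dist_eq]
  have h2 : Real.sqrt (∑ i : Fin n, dist (x i) (y i) ^ 2) < Real.sqrt (n * s ^ 2) := by
    apply Real.sqrt_lt_sqrt (Finset.sum_nonneg fun i _ => sq_nonneg _)
    rw [← hsum2]; exact hsum
  have h3 : Real.sqrt ((n : ℝ) * s ^ 2) = s * Real.sqrt n := by
    rw [Real.sqrt_mul (Nat.cast_nonneg n), Real.sqrt_sq (le_of_lt hs)]
    ring
  rw [← h3]; exact h2

end Cubes

lemma coord_abs_le_norm {n : ℕ} (x : EuclideanSpace ℝ (Fin n)) (i : Fin n) :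
    |x i| ≤ ‖x‖ := by
  rw [EuclideanSpace.norm_eq]
  have h1 : ‖x i‖ ^ 2 ≤ ∑ j : Fin n, ‖x j‖ ^ 2 :=
    Finset.single_le_sum (f := fun j => ‖x j‖ ^ 2) (fun j _ => sq_nonneg _) (Finset.mem_univ i)
  have h2 : |x i| = Real.sqrt (‖x i‖ ^ 2) := by
    rw [Real.sqrt_sq (norm_nonneg _), Real.norm_eq_abs]
  rw [h2]
  exact Real.sqrt_le_sqrt h1

set_option maxHeartbeats 2000000 in
theorem good_partition_of_positive_reach {n : ℕ}
    (E : Set (EuclideanSpace ℝ (Fin n))) (hEopen : IsOpen E)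
    (hEbdd : Bornology.IsBounded E)
    (ρ : ℝ) (hρ : 0 < ρ) (hreach : ENNReal.ofReal ρ < reach Eᶜ)
    (δ : ℝ) (hδ0 : 0 < δ) (hδρ : δ < ρ) :
    ∃ 𝓡 : Finset (Set (EuclideanSpace ℝ (Fin n))),
      (∀ R ∈ 𝓡, MeasurableSet R) ∧
      (∀ R ∈ 𝓡, ∀ R' ∈ 𝓡, R ≠ R' → Disjoint R R') ∧
      ⋃₀ (𝓡 : Set (Set (EuclideanSpace ℝ (Fin n)))) = E ∧
      ∀ R ∈ 𝓡, ENNReal.ofReal (δ ^ n / (n : ℝ) ^ ((n : ℝ) / 2)) ≤ volume R ∧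
        Metric.diam R ≤ 3 * δ := by
  classical
  by_cases hEempty : E = ∅
  · refine ⟨∅, by simp, by simp, by simp [hEempty], by simp⟩
  obtain ⟨p₀, hp₀⟩ := Set.nonempty_iff_ne_empty.mpr hEempty
  by_cases hn : n = 0
  · subst hn
    have hsub : ∀ x y : EuclideanSpace ℝ (Fin 0), x = y :=
      fun x y => PiLp.ext fun i => Fin.elim0 i
    have huniv : E = Set.univ :=
      Set.eq_univ_of_forall fun y => hsub y p₀ ▸ hp₀
    refine ⟨{Set.univ}, ?_, ?_, ?_, ?_⟩
    · intro R hR; rw [Finset.mem_singleton] at hR; subst hR; exact MeasurableSet.univ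
    · intro R hR R' hR' hne
      rw [Finset.mem_singleton] at hR hR'
      exact absurd (hR.trans hR'.symm) hne
    · simp [huniv]
    · intro R hR; rw [Finset.mem_singleton] at hR; subst hR
      constructor
      · have hvol : volume (Set.univ : Set (EuclideanSpace ℝ (Fin 0))) = 1 := by
          have h := (EuclideanSpace.volume_preserving_symm_measurableEquiv_toLp (Fin 0)).measure_preimage
            MeasurableSet.univ.nullMeasurableSet
          rw [Set.preimage_univ] at h
          rw [h, volume_pi, Measure.pi_univ]
          simp
        rw [hvol]
        have hbound : δ ^ 0 / ((0 : ℕ) : ℝ) ^ (((0 : ℕ) : ℝ) / 2) = 1 := by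
          norm_num
        rw [hbound]
        simp
      · have hss : (Set.univ : Set (EuclideanSpace ℝ (Fin 0))).Subsingleton :=
          fun x _ y _ => hsub x y
        rw [Metric.diam_subsingleton hss]
        linarith
  have hn' : 0 < n := Nat.pos_of_ne_zero hn
  -- the complement is nonempty
  have hAclosed : IsClosed Eᶜ := hEopen.isClosed_compl
  have hAne : Eᶜ.Nonempty := by
    by_contra h
    have hEuniv : E = Set.univ := by
      rw [← Set.compl_empty_iff]
      exact Set.not_nonempty_iff_eq_empty.mp h
    obtain ⟨M, hM⟩ := hEbdd.subset_closedBall 0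
    set c : EuclideanSpace ℝ (Fin n) :=
      (MeasurableEquiv.toLp 2 (Fin n → ℝ)).symm.symm (fun _ => |M| + 1) with hc
    have hcmem : c ∈ closedBall (0 : EuclideanSpace ℝ (Fin n)) M := by
      apply hM; rw [hEuniv]; trivial
    have hcnorm : ‖c‖ ≤ M := by
      rw [mem_closedBall, dist_zero_right] at hcmem; exact hcmem
    have hcoord : ∀ i : Fin n, c i = |M| + 1 := fun i => rfl
    have hge : |M| + 1 ≤ ‖c‖ := by
      have := coord_abs_le_norm c ⟨0, hn'⟩
      rw [hcoord ⟨0, hn'⟩] at this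
      have habs : |(|M| + 1)| = |M| + 1 := abs_of_pos (by positivity)
      linarith
    have : M ≤ |M| := le_abs_self M
    linarith
  -- grid side length
  set s : ℝ := δ / Real.sqrt n with hsdef
  have hsqrtpos : 0 < Real.sqrt n := Real.sqrt_pos.mpr (by exact_mod_cast hn')
  have hs : 0 < s := div_pos hδ0 hsqrtpos
  have hsδ : s * Real.sqrt n = δ := div_mul_cancel₀ δ (ne_of_gt hsqrtpos)
  -- cubes of points deep inside E are contained in E
  have hball : ∀ y : EuclideanSpace ℝ (Fin n), δ ≤ infDist y Eᶜ →
      gridCube s (fun i => ⌊y i / s⌋) ⊆ E := by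
    intro y hy z hz
    by_contra hzE
    have hzc : z ∈ Eᶜ := hzE
    have h1 : infDist y Eᶜ ≤ dist y z := infDist_le_dist_of_mem hzc
    have h2 : dist y z < s * Real.sqrt n :=
      dist_lt_of_mem_gridCube hn' hs (mem_gridCube_floor hs y) hz
    rw [hsδ] at h2
    linarith
  -- bounding box
  obtain ⟨M0, hM0⟩ := hEbdd.subset_closedBall 0
  set M : ℝ := |M0| with hMdef
  have hM : E ⊆ closedBall 0 M :=
    hM0.trans (closedBall_subset_closedBall (le_abs_self M0))
  set K0 : ℤ := ⌈M / s⌉ + 1 with hK0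
  set box : Finset (Fin n → ℤ) := Fintype.piFinset fun _ => Finset.Icc (-K0) K0 with hboxdef
  have hbox : ∀ k : Fin n → ℤ, gridCube s k ⊆ E → k ∈ box := by
    intro k hk
    obtain ⟨x, hx⟩ := gridCube_nonempty hs k
    have hxM : ‖x‖ ≤ M := by
      have := hM (hk hx)
      rwa [mem_closedBall, dist_zero_right] at this
    rw [hboxdef, Fintype.mem_piFinset]
    intro i
    rw [Finset.mem_Icc]
    have hco : |x i| ≤ M := le_trans (coord_abs_le_norm x i) hxM
    have hcoM : -M ≤ x i ∧ x i ≤ M := abs_le.mp hco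
    obtain ⟨h1, h2⟩ := hx i
    have hceil : M / s ≤ (⌈M / s⌉ : ℝ) := Int.le_ceil _
    constructor
    · -- -K0 ≤ k i
      have ha : -M < ((k i : ℝ) + 1) * s := lt_of_le_of_lt hcoM.1 h2
      have hb : -M / s < (k i : ℝ) + 1 := by
        rw [div_lt_iff₀ hs]; linarith
      have hc2 : ((-K0 : ℤ) : ℝ) < (k i : ℝ) := by
        have : -(M / s) ≥ -((⌈M / s⌉ : ℝ)) := by linarith
        push_cast [hK0]
        have hms : -M / s = -(M / s) := by ring
        rw [hms] at hb
        linarith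
      exact le_of_lt (by exact_mod_cast hc2)
    · -- k i ≤ K0
      have ha : (k i : ℝ) * s ≤ M := le_trans h1 hcoM.2
      have hb : (k i : ℝ) ≤ M / s := by
        rw [le_div_iff₀ hs]; exact ha
      have hc2 : (k i : ℝ) ≤ ((K0 : ℤ) : ℝ) := by
        push_cast [hK0]; linarith
      exact_mod_cast hc2
  -- full cubes
  set Fset : Finset (Fin n → ℤ) := box.filter (fun k => gridCube s k ⊆ E) with hFdef
  have hFsub : ∀ k ∈ Fset, gridCube s k ⊆ E := fun k hk => (Finset.mem_filter.mp hk).2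
  have hFmem : ∀ k, gridCube s k ⊆ E → k ∈ Fset :=
    fun k h => Finset.mem_filter.mpr ⟨hbox k h, h⟩
  -- boundary region
  set Bset : Set (EuclideanSpace ℝ (Fin n)) := E \ ⋃ k ∈ Fset, gridCube s k with hBdef
  have hBmeas : MeasurableSet Bset :=
    hEopen.measurableSet.diff
      (Fset.measurableSet_biUnion fun k _ => gridCube_measurableSet s k)
  obtain ⟨enc, hencinj⟩ := Countable.exists_injective_nat (Fin n → ℤ)
  set piece : (Fin n → ℤ) → Set (EuclideanSpace ℝ (Fin n)) := fun k =>
    gridCube s k ∪ ((Bset ∩ {x | infDist x (gridCube s k) < δ}) ∩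
      ⋂ k' ∈ Fset, {x | infDist x (gridCube s k') < δ → enc k ≤ enc k'}) with hpiecedef
  -- every boundary point is close to a full cube
  have hcover : ∀ x ∈ Bset, ∃ k ∈ Fset, infDist x (gridCube s k) < δ := by
    intro x hx
    have hxE : x ∈ E := hx.1
    have hxpos : 0 < infDist x Eᶜ :=
      (hAclosed.notMem_iff_infDist_pos hAne).mp (fun h => h hxE)
    by_cases hd : δ ≤ infDist x Eᶜ
    · exfalso
      exact hx.2 (Set.mem_biUnion (hFmem _ (hball x hd)) (mem_gridCube_floor hs x))
    · push_neg at hd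
      obtain ⟨y, hy1, hy2⟩ := escape hEopen hAne hreach hδ0 hδρ hxpos (le_of_lt hd)
      refine ⟨fun i => ⌊y i / s⌋, hFmem _ (hball y hy1), ?_⟩
      exact lt_of_le_of_lt (infDist_le_dist_of_mem (mem_gridCube_floor hs y)) hy2
  -- every point of a piece is within δ of its cube
  have hnear : ∀ k, ∀ z ∈ piece k, ∃ w ∈ gridCube s k, dist z w ≤ δ := by
    intro k z hz
    rcases hz with hz | hz
    · exact ⟨z, hz, by simp [dist_self]; positivity⟩
    · have h1 : infDist z (gridCube s k) < δ := hz.1.2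
      obtain ⟨w, hw1, hw2⟩ := (infDist_lt_iff (gridCube_nonempty hs k)).mp h1
      exact ⟨w, hw1, le_of_lt hw2⟩
  refine ⟨Fset.image piece, ?_, ?_, ?_, ?_⟩
  · -- measurability
    intro R hR
    obtain ⟨k, hk, rfl⟩ := Finset.mem_image.mp hR
    apply (gridCube_measurableSet s k).union
    apply MeasurableSet.inter
    · apply hBmeas.inter
      exact (isOpen_lt (continuous_infDist_pt _) continuous_const).measurableSet
    · apply Finset.measurableSet_biInter
      intro k' _
      by_cases he : enc k ≤ enc k'
      · have : {x : EuclideanSpace ℝ (Fin n) |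
            infDist x (gridCube s k') < δ → enc k ≤ enc k'} = Set.univ := by
          ext x; simp [he]
        rw [this]; exact MeasurableSet.univ
      · have : {x : EuclideanSpace ℝ (Fin n) |
            infDist x (gridCube s k') < δ → enc k ≤ enc k'} =
            {x : EuclideanSpace ℝ (Fin n) | infDist x (gridCube s k') < δ}ᶜ := by
          ext x; simp [he]
        rw [this]
        exact (isOpen_lt (continuous_infDist_pt _) continuous_const).measurableSet.compl
  · -- pairwise disjoint
    intro R hR R' hR' hne
    obtain ⟨k, hk, rfl⟩ := Finset.mem_image.mp hR
    obtain ⟨k', hk', rfl⟩ := Finset.mem_image.mp hR'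
    have hkk' : k ≠ k' := fun h => hne (by rw [h])
    rw [Set.disjoint_left]
    rintro x (hx | hx) (hx' | hx')
    · exact absurd ((eq_floor_of_mem_gridCube hs hx).trans
        (eq_floor_of_mem_gridCube hs hx').symm) hkk'
    · exact hx'.1.1.2 (Set.mem_biUnion hk hx)
    · exact hx.1.1.2 (Set.mem_biUnion hk' hx')
    · have h1 : enc k ≤ enc k' := by
        have := hx.2
        rw [Set.mem_iInter₂] at this
        exact this k' hk' hx'.1.2
      have h2 : enc k' ≤ enc k := by
        have := hx'.2
        rw [Set.mem_iInter₂] at this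
        exact this k hk hx.1.2
      exact absurd (hencinj (le_antisymm h1 h2)) hkk'
  · -- union is E
    rw [Finset.coe_image, Set.sUnion_image]
    apply Set.Subset.antisymm
    · apply Set.iUnion₂_subset
      intro k hk
      rintro x (hx | hx)
      · exact hFsub k hk hx
      · exact hx.1.1.1
    · intro x hxE
      by_cases hxU : x ∈ ⋃ k ∈ Fset, gridCube s k
      · obtain ⟨k, hk, hx⟩ := Set.mem_iUnion₂.mp hxU
        exact Set.mem_iUnion₂.mpr ⟨k, hk, Or.inl hx⟩
      · have hxB : x ∈ Bset := ⟨hxE, hxU⟩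
        obtain ⟨kc, hkc, hkcd⟩ := hcover x hxB
        set S : Finset (Fin n → ℤ) :=
          Fset.filter (fun k => infDist x (gridCube s k) < δ) with hSdef
        have hSne : S.Nonempty := ⟨kc, Finset.mem_filter.mpr ⟨hkc, hkcd⟩⟩
        obtain ⟨k, hkS, hkmin⟩ := S.exists_min_image enc hSne
        have hkF : k ∈ Fset := (Finset.mem_filter.mp hkS).1
        have hkd : infDist x (gridCube s k) < δ := (Finset.mem_filter.mp hkS).2
        refine Set.mem_iUnion₂.mpr ⟨k, hkF, Or.inr ⟨⟨hxB, hkd⟩, ?_⟩⟩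
        rw [Set.mem_iInter₂]
        intro k' hk' hd'
        exact hkmin k' (Finset.mem_filter.mpr ⟨hk', hd'⟩)
  · -- volume and diameter
    intro R hR
    obtain ⟨k, hk, rfl⟩ := Finset.mem_image.mp hR
    constructor
    · -- volume
      have hvol : volume (gridCube s k) = ENNReal.ofReal s ^ n := gridCube_volume hs.le k
      have heq : δ ^ n / (n : ℝ) ^ ((n : ℝ) / 2) = s ^ n := by
        have hrp : (n : ℝ) ^ ((n : ℝ) / 2) = (Real.sqrt n) ^ n := by
          rw [Real.sqrt_eq_rpow, ← Real.rpow_natCast (((n : ℝ)) ^ ((1 : ℝ) / 2)) n,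
            ← Real.rpow_mul (Nat.cast_nonneg n)]
          congr 1
          ring
        rw [hrp, hsdef, div_pow]
      rw [heq, ENNReal.ofReal_pow hs.le, ← hvol]
      exact measure_mono Set.subset_union_left
    · -- diameter
      apply Metric.diam_le_of_forall_dist_le (by linarith)
      intro p hp q hq
      obtain ⟨wp, hwp1, hwp2⟩ := hnear k p hp
      obtain ⟨wq, hwq1, hwq2⟩ := hnear k q hq
      have hww : dist wp wq ≤ δ := by
        have := dist_lt_of_mem_gridCube hn' hs hwp1 hwq1
        rw [hsδ] at this
        linarith
      calc dist p q ≤ dist p wp + dist wp q := dist_triangle _ _ _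
        _ ≤ dist p wp + (dist wp wq + dist wq q) := by
            linarith [dist_triangle wp wq q]
        _ ≤ δ + (δ + δ) := by
            have : dist wq q = dist q wq := dist_comm _ _
            linarith [this]
        _ = 3 * δ := by ring
end

section
/- If E is a bounded open subset of ℝⁿ with reach(Eᶜ) > ρ > 0, then for any δ ∈ (0, ρ) there exists a natural number M depending on δ and E such that for any i.i.d. uniform sample 𝕏_N = (X₁,…,X_N) from E, P(B(𝕏_N, 3δ) ⊇ E) ≥ 1 - M·exp(-δⁿ N / (n^{n/2} vol(E))). -/
open MeasureTheory Metric Set ProbabilityTheory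
open scoped ENNReal

section Aux
variable {n : ℕ} {A : Set (EuclideanSpace ℝ (Fin n))}

open Classical in
noncomputable def nearestPt (A : Set (EuclideanSpace ℝ (Fin n)))
    (y : EuclideanSpace ℝ (Fin n)) : EuclideanSpace ℝ (Fin n) :=
  if h : ∃ a, a ∈ A ∧ Metric.infDist y A = dist y a then h.choose else y

lemma nearestPt_spec (hA : IsClosed A) (hne : A.Nonempty) (y : EuclideanSpace ℝ (Fin n)) :
    nearestPt A y ∈ A ∧ Metric.infDist y A = dist y (nearestPt A y) := by
  have h : ∃ a, a ∈ A ∧ Metric.infDist y A = dist y a := by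
    obtain ⟨a, ha, hd⟩ := hA.exists_infDist_eq_dist hne y
    exact ⟨a, ha, hd⟩
  classical
  rw [nearestPt, dif_pos h]
  exact h.choose_spec

/-- every point at `infDist < ρ` from `A` has unique nearest point, given reach. -/
lemma nearest_unique (hA : IsClosed A) (hne : A.Nonempty) {ρ : ℝ}
    (hreach : ENNReal.ofReal ρ < reach A) {y : EuclideanSpace ℝ (Fin n)}
    (hy : Metric.infDist y A < ρ) {b : EuclideanSpace ℝ (Fin n)}
    (hb : b ∈ A) (hbd : dist y b = Metric.infDist y A) : b = nearestPt A y := by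
  obtain ⟨ha, hd⟩ := nearestPt_spec hA hne y
  have hmem : y ∈ Unp A := by
    have h1 : ENNReal.ofReal ρ < reachAt A (nearestPt A y) := by
      refine lt_of_lt_of_le hreach ?_
      exact biInf_le _ ha
    rw [reachAt, lt_sSup_iff] at h1
    obtain ⟨r, hr, hρr⟩ := h1
    apply hr
    show edist y (nearestPt A y) < r
    calc edist y (nearestPt A y) < ENNReal.ofReal ρ := by
          rw [edist_lt_ofReal]; rw [← hd] at *; exact hy
      _ ≤ r := hρr.le
  obtain ⟨u, _, hu⟩ := hmem
  have h1 : b = u := hu b ⟨hb, hbd⟩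
  have h2 : nearestPt A y = u := hu _ ⟨ha, hd.symm⟩
  rw [h1, h2]

/-- the gain estimate for one step away from the nearest point. -/
lemma step_gain (hA : IsClosed A) (hne : A.Nonempty) {c : EuclideanSpace ℝ (Fin n)}
    {ε : ℝ} (hε : 0 < ε) (hv : 0 < Metric.infDist c A)
    (hΔ : dist (nearestPt A (c + (ε / Metric.infDist c A) • (c - nearestPt A c)))
        (nearestPt A c) ≤ Metric.infDist c A / 2) :
    Metric.infDist c A + ε / 2 ≤
      Metric.infDist (c + (ε / Metric.infDist c A) • (c - nearestPt A c)) A := by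
  set v := Metric.infDist c A with hvdef
  set ξc := nearestPt A c with hξc
  set z := c + (ε / v) • (c - ξc) with hz
  set ξz := nearestPt A z with hξz
  obtain ⟨hξcA, hξcd⟩ := nearestPt_spec hA hne c
  obtain ⟨hξzA, hξzd⟩ := nearestPt_spec hA hne z
  have hwnorm : ‖c - ξc‖ = v := by rw [← dist_eq_norm, ← hξcd]
  have hbnorm : ‖(ε / v) • (c - ξc)‖ = ε := by
    rw [norm_smul, hwnorm, Real.norm_eq_abs, abs_of_pos (by positivity)]
    field_simp
  have hca : v ≤ ‖c - ξz‖ := by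
    rw [← dist_eq_norm]; exact Metric.infDist_le_dist_of_mem hξzA
  have hinner : (ε / v) * ((v:ℝ)^2 - v * (v/2)) ≤
      inner ℝ (c - ξz) ((ε / v) • (c - ξc)) := by
    rw [real_inner_smul_right]
    have hdecomp : c - ξz = (c - ξc) + (ξc - ξz) := by abel
    rw [hdecomp, inner_add_left]
    have h1 : inner ℝ (c - ξc) (c - ξc) = (v:ℝ)^2 := by
      rw [real_inner_self_eq_norm_sq, hwnorm]
    have h2 : -(v * (v/2)) ≤ inner ℝ (ξc - ξz) (c - ξc) := by
      have hn : ‖ξc - ξz‖ ≤ v/2 := by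
        rw [← dist_eq_norm, dist_comm]; exact hΔ
      have : |(inner ℝ (ξc - ξz) (c - ξc) : ℝ)| ≤ (v/2) * v := by
        calc |(inner ℝ (ξc - ξz) (c - ξc) : ℝ)| ≤ ‖ξc - ξz‖ * ‖c - ξc‖ :=
              abs_real_inner_le_norm _ _
          _ ≤ (v/2) * v := by
              rw [hwnorm]
              apply mul_le_mul hn le_rfl (by positivity) (by positivity)
      nlinarith [abs_le.1 this]
    have hεv : 0 ≤ ε / v := by positivity
    rw [h1]
    nlinarith
  have hsq : (v + ε/2)^2 ≤ ‖z - ξz‖^2 := by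
    have hzdecomp : z - ξz = (c - ξz) + (ε / v) • (c - ξc) := by
      rw [hz]; abel
    rw [hzdecomp, norm_add_sq_real, hbnorm]
    have h3 : (ε / v) * ((v:ℝ)^2 - v * (v/2)) = ε * v / 2 := by field_simp; ring
    nlinarith [hca, hinner, hε.le, hv.le]
  have hnn : 0 ≤ v + ε/2 := by positivity
  have : v + ε/2 ≤ ‖z - ξz‖ := by
    nlinarith [norm_nonneg (z - ξz)]
  rw [hξzd, dist_eq_norm]
  exact this

/-- pointwise "continuity of projection" statement needed at the maximizer. -/
lemma exists_good_step (hA : IsClosed A) (hne : A.Nonempty) {ρ : ℝ}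
    (hreach : ENNReal.ofReal ρ < reach A) {c : EuclideanSpace ℝ (Fin n)}
    (hv0 : 0 < Metric.infDist c A) (hvρ : Metric.infDist c A < ρ)
    {ε₁ : ℝ} (hε₁ : 0 < ε₁) :
    ∃ ε : ℝ, 0 < ε ∧ ε ≤ ε₁ ∧
      dist (nearestPt A (c + (ε / Metric.infDist c A) • (c - nearestPt A c)))
        (nearestPt A c) ≤ Metric.infDist c A / 2 := by
  by_contra hcl
  push_neg at hcl
  set v := Metric.infDist c A with hvdef
  set ξc := nearestPt A c with hξc
  obtain ⟨hξcA, hξcd⟩ := nearestPt_spec hA hne c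
  set ε : ℕ → ℝ := fun k => min ε₁ (1 / (k+1)) with hεdef
  have hεpos : ∀ k, 0 < ε k := fun k => lt_min hε₁ (by positivity)
  have hεle : ∀ k, ε k ≤ ε₁ := fun k => min_le_left _ _
  set z : ℕ → EuclideanSpace ℝ (Fin n) := fun k => c + (ε k / v) • (c - ξc) with hzdef
  set b : ℕ → EuclideanSpace ℝ (Fin n) := fun k => nearestPt A (z k) with hbdef
  have hbad : ∀ k, v / 2 < dist (b k) ξc := fun k => hcl (ε k) (hεpos k) (hεle k)
  have hdzc : ∀ k, dist (z k) c = ε k := by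
    intro k
    rw [hzdef]
    simp only [dist_eq_norm, add_sub_cancel_left]
    rw [norm_smul, Real.norm_eq_abs, abs_of_pos (by positivity), ← dist_eq_norm, ← hξcd]
    field_simp
    rfl
  have hzc : Filter.Tendsto z Filter.atTop (nhds c) := by
    rw [tendsto_iff_dist_tendsto_zero]
    simp only [hdzc]
    apply squeeze_zero (fun k => (hεpos k).le) (fun k => min_le_right _ _)
    exact tendsto_one_div_add_atTop_nhds_zero_nat
  have hbS : ∀ k, b k ∈ A ∩ closedBall c (v + 2 * (ε₁ + 1)) := by
    intro k
    obtain ⟨hbA, hbd⟩ := nearestPt_spec hA hne (z k)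
    refine ⟨hbA, ?_⟩
    rw [mem_closedBall]
    have h1 : dist (b k) (z k) = Metric.infDist (z k) A := by rw [hbd, dist_comm]
    have h2 : Metric.infDist (z k) A ≤ v + ε k := by
      have := Metric.infDist_le_infDist_add_dist (x := z k) (y := c) (s := A)
      rw [hdzc k] at this; rw [hvdef]; linarith
    calc dist (b k) c ≤ dist (b k) (z k) + dist (z k) c := dist_triangle _ _ _
      _ ≤ (v + ε k) + ε k := by rw [h1, hdzc k]; exact add_le_add_left h2 _
      _ ≤ v + 2 * (ε₁ + 1) := by
          have := hεle k; nlinarith [hεpos k]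
  have hScompact : IsCompact (A ∩ closedBall c (v + 2 * (ε₁ + 1))) :=
    isCompact_of_isClosed_isBounded (hA.inter Metric.isClosed_closedBall)
      (Metric.isBounded_closedBall.subset inter_subset_right)
  obtain ⟨blim, hblimS, φ, hφ, hbφ⟩ := hScompact.tendsto_subseq hbS
  have hzφ : Filter.Tendsto (z ∘ φ) Filter.atTop (nhds c) :=
    hzc.comp hφ.tendsto_atTop
  have hd1 : Filter.Tendsto (fun k => dist (z (φ k)) (b (φ k))) Filter.atTop
      (nhds (dist c blim)) := Filter.Tendsto.dist hzφ hbφ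
  have hd2 : Filter.Tendsto (fun k => dist (z (φ k)) (b (φ k))) Filter.atTop
      (nhds v) := by
    have : ∀ k, dist (z (φ k)) (b (φ k)) = Metric.infDist (z (φ k)) A := by
      intro k; exact ((nearestPt_spec hA hne (z (φ k))).2).symm
    simp only [this]
    exact ((Metric.continuous_infDist_pt A).tendsto c).comp hzφ
  have hcb : dist c blim = v := tendsto_nhds_unique hd1 hd2
  have hbeq : blim = ξc :=
    nearest_unique hA hne hreach hvρ hblimS.1 hcb
  have hlim2 : Filter.Tendsto (fun k => dist (b (φ k)) ξc) Filter.atTop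
      (nhds (dist blim ξc)) := Filter.Tendsto.dist hbφ tendsto_const_nhds
  have hge : v / 2 ≤ dist blim ξc :=
    ge_of_tendsto hlim2 (Filter.Eventually.of_forall fun k => (hbad (φ k)).le)
  rw [hbeq, dist_self] at hge
  linarith

lemma climb (hA : IsClosed A) (hne : A.Nonempty) {ρ δ : ℝ}
    (hreach : ENNReal.ofReal ρ < reach A) (hδ0 : 0 < δ) (hδρ : δ < ρ)
    (x : EuclideanSpace ℝ (Fin n)) (hx : 0 < Metric.infDist x A) :
    ∃ c, dist x c ≤ 2 * δ ∧ δ ≤ Metric.infDist c A := by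
  set d := Metric.infDist x A with hd
  by_cases hdδ : δ ≤ d
  · exact ⟨x, by simp [dist_self]; positivity, hdδ⟩
  push_neg at hdδ
  set W : Set (EuclideanSpace ℝ (Fin n)) :=
    {y | dist y x ≤ 2 * (Metric.infDist y A - d) ∧ Metric.infDist y A ≤ δ} with hW
  have hWclosed : IsClosed W := by
    have hc : Continuous fun y : EuclideanSpace ℝ (Fin n) => Metric.infDist y A :=
      Metric.continuous_infDist_pt A
    apply IsClosed.inter
    · exact isClosed_le (continuous_id.dist continuous_const)
        (continuous_const.mul (hc.sub continuous_const))
    · exact isClosed_le hc continuous_const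
  have hWbdd : Bornology.IsBounded W := by
    apply (Metric.isBounded_closedBall (x := x) (r := 2 * δ)).subset
    rintro y ⟨h1, h2⟩
    rw [mem_closedBall]
    nlinarith [Metric.infDist_nonneg (x := y) (s := A), hx]
  have hWcompact : IsCompact W := isCompact_of_isClosed_isBounded hWclosed hWbdd
  have hxW : x ∈ W := ⟨by simp [dist_self]; exact le_of_eq hd, hdδ.le⟩
  obtain ⟨c, hcW, hcmax⟩ := hWcompact.exists_isMaxOn ⟨x, hxW⟩
    ((Metric.continuous_infDist_pt A).continuousOn)
  set v := Metric.infDist c A with hv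
  have hvd : d ≤ v := hcmax hxW
  have hv0 : 0 < v := lt_of_lt_of_le hx hvd
  have hvδ : v ≤ δ := hcW.2
  have hδv : δ ≤ v := by
    by_contra hlt
    push_neg at hlt
    have hvρ : v < ρ := lt_trans hlt hδρ
    obtain ⟨ε, hε0, hεle, hΔ⟩ := exists_good_step hA hne hreach hv0 hvρ
      (sub_pos.2 hlt : (0:ℝ) < δ - v)
    set z := c + (ε / v) • (c - nearestPt A c) with hz
    have hgain : v + ε / 2 ≤ Metric.infDist z A := step_gain hA hne hε0 hv0 hΔ
    have hdzc : dist z c = ε := by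
      rw [hz]
      simp only [dist_eq_norm, add_sub_cancel_left]
      rw [norm_smul, Real.norm_eq_abs, abs_of_pos (by positivity), ← dist_eq_norm,
        ← (nearestPt_spec hA hne c).2]
      field_simp
      rfl
    have hzW : z ∈ W := by
      constructor
      · have h1 : dist z x ≤ dist z c + dist c x := dist_triangle _ _ _
        have h2 : dist c x ≤ 2 * (v - d) := hcW.1
        rw [hdzc] at h1
        nlinarith
      · have h1 : Metric.infDist z A ≤ v + dist z c := by
          have := Metric.infDist_le_infDist_add_dist (x := z) (y := c) (s := A)
          rw [hv]; linarith
        rw [hdzc] at h1; linarith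
    have hcon : Metric.infDist z A ≤ v := hcmax hzW
    linarith
  refine ⟨c, ?_, by rw [← hv]; exact hδv⟩
  have h2 : dist c x ≤ 2 * (v - d) := hcW.1
  rw [dist_comm]
  nlinarith [hx]
end Aux

lemma cube_vol_le_ball {n : ℕ} (hn : n ≠ 0) (c : EuclideanSpace ℝ (Fin n)) {δ : ℝ} (hδ : 0 < δ) :
    ENNReal.ofReal (δ ^ n / (n : ℝ) ^ ((n : ℝ) / 2)) ≤ volume (closedBall c (δ / 2)) := by
  have hnpos : (0:ℝ) < n := by exact_mod_cast Nat.pos_of_ne_zero hn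
  have hsq : 0 < Real.sqrt n := Real.sqrt_pos.2 hnpos
  set s : ℝ := δ / Real.sqrt n with hs
  have hspos : 0 < s := by positivity
  set Q : Set (EuclideanSpace ℝ (Fin n)) :=
    (MeasurableEquiv.toLp 2 (Fin n → ℝ)).symm ⁻¹'
      (Set.univ.pi fun i => Icc (c i - s / 2) (c i + s / 2)) with hQ
  have hQB : Q ⊆ closedBall c (δ / 2) := by
    intro y hy
    simp only [hQ, Set.mem_preimage, Set.mem_univ_pi] at hy
    have hy' : ∀ i, y i ∈ Icc (c i - s / 2) (c i + s / 2) := fun i => hy i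
    rw [mem_closedBall, EuclideanSpace.dist_eq]
    have hbound : ∀ i, dist (y i) (c i) ^ 2 ≤ (s / 2) ^ 2 := by
      intro i
      have h := hy' i
      rw [Real.dist_eq]
      have : |y i - c i| ≤ s / 2 := by
        rw [abs_le]; constructor <;> [linarith [h.1]; linarith [h.2]]
      nlinarith [abs_nonneg (y i - c i)]
    have hsum : (∑ i, dist (y i) (c i) ^ 2) ≤ n * (s / 2) ^ 2 := by
      calc (∑ i, dist (y i) (c i) ^ 2) ≤ ∑ _i : Fin n, (s / 2) ^ 2 :=
            Finset.sum_le_sum fun i _ => hbound i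
        _ = n * (s / 2) ^ 2 := by simp [Finset.sum_const, Finset.card_univ]
    calc Real.sqrt (∑ i, dist (y i) (c i) ^ 2) ≤ Real.sqrt (n * (s / 2) ^ 2) :=
          Real.sqrt_le_sqrt hsum
      _ = Real.sqrt n * (s / 2) := by
          rw [Real.sqrt_mul hnpos.le, Real.sqrt_sq (by positivity)]
      _ = δ / 2 := by rw [hs]; field_simp
  have hQvol : volume Q = ENNReal.ofReal (s ^ n) := by
    rw [hQ, (EuclideanSpace.volume_preserving_symm_measurableEquiv_toLp (Fin n)).measure_preimage
      (MeasurableSet.univ_pi fun i => measurableSet_Icc).nullMeasurableSet]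
    rw [volume_pi_pi]
    simp only [Real.volume_Icc]
    rw [Finset.prod_congr rfl (fun i _ => by rw [show c i + s / 2 - (c i - s / 2) = s by ring]),
      Finset.prod_const, Finset.card_univ, Fintype.card_fin, ← ENNReal.ofReal_pow hspos.le]
  have hsn : s ^ n = δ ^ n / (n : ℝ) ^ ((n : ℝ) / 2) := by
    rw [hs, div_pow]
    congr 1
    rw [show Real.sqrt (n:ℝ) = (n:ℝ) ^ ((1:ℝ)/2) from Real.sqrt_eq_rpow _,
      ← Real.rpow_natCast ((n:ℝ) ^ ((1:ℝ)/2)) n, ← Real.rpow_mul hnpos.le]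
    congr 1
    ring
  rw [← hsn, ← hQvol]
  exact measure_mono hQB

theorem cover_prob_of_positive_reach {n : ℕ}
    (E : Set (EuclideanSpace ℝ (Fin n))) (hEopen : IsOpen E)
    (hEbdd : Bornology.IsBounded E)
    (ρ : ℝ) (hρ : 0 < ρ) (hreach : ENNReal.ofReal ρ < reach Eᶜ)
    (δ : ℝ) (hδ0 : 0 < δ) (hδρ : δ < ρ)
    {Ω : Type*} [MeasurableSpace Ω] (P : Measure Ω) [IsProbabilityMeasure P] :
    ∃ M : ℕ, ∀ (N : ℕ) (X : Fin N → Ω → EuclideanSpace ℝ (Fin n)),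
      iIndepFun X P →
      (∀ i, ∀ A : Set (EuclideanSpace ℝ (Fin n)), MeasurableSet A →
        P (X i ⁻¹' A) = volume (A ∩ E) / volume E) →
      1 - (M : ℝ≥0∞) *
          ENNReal.ofReal (Real.exp (-(δ ^ n) * N / ((n : ℝ) ^ ((n : ℝ) / 2) * (volume E).toReal))) ≤
        P {ω | E ⊆ ⋃ i, Metric.closedBall (X i ω) (3 * δ)} := by
  classical
  -- trivial case: E empty
  by_cases hEne : E = ∅
  · refine ⟨1, fun N X _ _ => ?_⟩
    have : {ω | E ⊆ ⋃ i, Metric.closedBall (X i ω) (3 * δ)} = univ := by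
      ext ω; simp [hEne]
    rw [this, measure_univ]
    exact tsub_le_self.trans le_rfl
  replace hEne : E.Nonempty := nonempty_iff_ne_empty.2 hEne
  -- degenerate case: Eᶜ empty (forces subsingleton space)
  by_cases hAne : Eᶜ = ∅
  · have hEuniv : E = univ := by
      rw [← compl_empty_iff]; exact hAne
    have hsub : Subsingleton (EuclideanSpace ℝ (Fin n)) := by
      by_contra h
      rw [not_subsingleton_iff_nontrivial] at h
      exact NormedSpace.unbounded_univ ℝ (EuclideanSpace ℝ (Fin n)) (hEuniv ▸ hEbdd)
    refine ⟨1, fun N X _ _ => ?_⟩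
    match N with
    | 0 =>
      have : -(δ ^ n) * ((0:ℕ):ℝ) / ((n : ℝ) ^ ((n : ℝ) / 2) * (volume E).toReal) = 0 := by
        norm_num
      rw [this, Real.exp_zero, ENNReal.ofReal_one, Nat.cast_one, one_mul, tsub_self]
      exact zero_le
    | (N+1) =>
      have : {ω | E ⊆ ⋃ i, Metric.closedBall (X i ω) (3 * δ)} = univ := by
        ext ω
        simp only [mem_setOf_eq, mem_univ, iff_true]
        intro x _
        refine mem_iUnion.2 ⟨0, ?_⟩
        rw [mem_closedBall, Subsingleton.elim x (X 0 ω), dist_self]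
        positivity
      rw [this, measure_univ]
      exact tsub_le_self.trans le_rfl
  replace hAne : (Eᶜ).Nonempty := nonempty_iff_ne_empty.2 hAne
  have hAclosed : IsClosed Eᶜ := hEopen.isClosed_compl
  -- n ≠ 0
  have hn : n ≠ 0 := by
    rintro rfl
    haveI : Subsingleton (EuclideanSpace ℝ (Fin 0)) := by
      constructor; intro a b; ext i; exact absurd i.2 (by simp)
    obtain ⟨x, hx⟩ := hEne
    obtain ⟨a, ha⟩ := hAne
    exact ha (Subsingleton.elim a x ▸ hx)
  have hnpos : (0:ℝ) < n := by exact_mod_cast Nat.pos_of_ne_zero hn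
  -- volume facts
  have hEmeas : MeasurableSet E := hEopen.measurableSet
  have hvolpos : 0 < volume E := hEopen.measure_pos volume hEne
  have hvolfin : volume E ≠ ⊤ := hEbdd.measure_lt_top.ne
  set V : ℝ := (volume E).toReal with hVdef
  have hV : 0 < V := ENNReal.toReal_pos hvolpos.ne' hvolfin
  set K : ℝ := δ ^ n / (n : ℝ) ^ ((n : ℝ) / 2) with hKdef
  have hrpow : (0:ℝ) < (n : ℝ) ^ ((n : ℝ) / 2) := Real.rpow_pos_of_pos hnpos _
  have hK : 0 < K := by rw [hKdef]; positivity
  -- the net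
  set Kset : Set (EuclideanSpace ℝ (Fin n)) := {y | δ ≤ Metric.infDist y Eᶜ} with hKset
  have hKsetE : Kset ⊆ E := by
    intro y hy
    by_contra hyE
    have : Metric.infDist y Eᶜ = 0 := Metric.infDist_zero_of_mem hyE
    rw [hKset] at hy
    simp only [mem_setOf_eq, this] at hy
    linarith
  have hKcompact : IsCompact Kset := by
    apply isCompact_of_isClosed_isBounded
    · exact isClosed_le continuous_const (Metric.continuous_infDist_pt _)
    · exact hEbdd.subset hKsetE
  obtain ⟨tset, htsub, htfin, htcov⟩ := hKcompact.finite_cover_balls (half_pos hδ0)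
  set T : Finset (EuclideanSpace ℝ (Fin n)) := htfin.toFinset with hT
  have hTmem : ∀ c, c ∈ T ↔ c ∈ tset := fun c => htfin.mem_toFinset
  refine ⟨T.card, fun N X hInd hX => ?_⟩
  set B : EuclideanSpace ℝ (Fin n) → Set (EuclideanSpace ℝ (Fin n)) :=
    fun c => closedBall c (δ / 2) with hB
  set bnd : ℝ≥0∞ :=
    ENNReal.ofReal (Real.exp (-(δ ^ n) * N / ((n : ℝ) ^ ((n : ℝ) / 2) * V))) with hbnd
  -- per-center bound
  have hcenter : ∀ c ∈ T, P (⋂ i, X i ⁻¹' (B c)ᶜ) ≤ bnd := by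
    intro c hc
    have hcK : δ ≤ Metric.infDist c Eᶜ := htsub ((hTmem c).1 hc)
    have hball_sub : B c ⊆ E := by
      intro y hy
      by_contra hyE
      have h1 : Metric.infDist c Eᶜ ≤ dist c y := Metric.infDist_le_dist_of_mem hyE
      rw [hB] at hy
      simp only [mem_closedBall] at hy
      rw [dist_comm] at h1
      linarith
    have hBE : B c ∩ E = B c := inter_eq_left.2 hball_sub
    have hvolB : ENNReal.ofReal K ≤ volume (B c ∩ E) := by
      rw [hBE]
      exact cube_vol_le_ball hn c hδ0
    -- independence
    have hprod : P (⋂ i, X i ⁻¹' (B c)ᶜ) = ∏ i : Fin N, P (X i ⁻¹' (B c)ᶜ) := by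
      have := (iIndepFun_iff_measure_inter_preimage_eq_mul.1 hInd) Finset.univ
        (sets := fun _ => (B c)ᶜ) (fun i _ => measurableSet_closedBall.compl)
      simpa using this
    have hfactor : ∀ i : Fin N, P (X i ⁻¹' (B c)ᶜ) ≤ ENNReal.ofReal (Real.exp (-(K / V))) := by
      intro i
      rw [hX i _ measurableSet_closedBall.compl]
      have hsplit : (B c)ᶜ ∩ E = E \ (B c ∩ E) := by
        ext y; simp only [mem_inter_iff, mem_compl_iff, mem_diff]; tauto
      have hfinB : volume (B c ∩ E) ≠ ⊤ :=
        (lt_of_le_of_lt (measure_mono inter_subset_right) hvolfin.lt_top).ne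
      rw [hsplit, measure_diff inter_subset_right
        ((measurableSet_closedBall.inter hEmeas).nullMeasurableSet) hfinB]
      have hEV : volume E = ENNReal.ofReal V := (ENNReal.ofReal_toReal hvolfin).symm
      calc (volume E - volume (B c ∩ E)) / volume E
          ≤ (ENNReal.ofReal V - ENNReal.ofReal K) / ENNReal.ofReal V := by
            rw [← hEV]
            exact ENNReal.div_le_div_right (tsub_le_tsub le_rfl hvolB) _
        _ = ENNReal.ofReal (V - K) / ENNReal.ofReal V := by
            rw [ENNReal.ofReal_sub _ hK.le]
        _ = ENNReal.ofReal ((V - K) / V) := (ENNReal.ofReal_div_of_pos hV).symm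
        _ ≤ ENNReal.ofReal (Real.exp (-(K / V))) := by
            apply ENNReal.ofReal_le_ofReal
            have h' : (V - K) / V = -(K / V) + 1 := by field_simp; ring
            rw [h']
            exact Real.add_one_le_exp _
    calc P (⋂ i, X i ⁻¹' (B c)ᶜ) = ∏ i : Fin N, P (X i ⁻¹' (B c)ᶜ) := hprod
      _ ≤ ∏ _i : Fin N, ENNReal.ofReal (Real.exp (-(K / V))) :=
          Finset.prod_le_prod' fun i _ => hfactor i
      _ = ENNReal.ofReal (Real.exp (-(K / V))) ^ N := by
          rw [Finset.prod_const, Finset.card_univ, Fintype.card_fin]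
      _ = bnd := by
          rw [← ENNReal.ofReal_pow (Real.exp_nonneg _), ← Real.exp_nat_mul, hbnd]
          congr 2
          rw [hKdef]
          field_simp
  -- union bound
  set S1 : Set Ω := ⋂ c ∈ T, ⋃ i, X i ⁻¹' (B c) with hS1
  have hincl : S1 ⊆ {ω | E ⊆ ⋃ i, Metric.closedBall (X i ω) (3 * δ)} := by
    intro ω hω
    simp only [mem_setOf_eq]
    intro x hx
    have hx0 : 0 < Metric.infDist x Eᶜ := by
      obtain ⟨r, hr0, hrsub⟩ := Metric.isOpen_iff.1 hEopen x hx
      by_contra h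
      push_neg at h
      have : Metric.infDist x Eᶜ < r := lt_of_le_of_lt h hr0
      obtain ⟨y, hyA, hyd⟩ := (Metric.infDist_lt_iff hAne).1 this
      exact hyA (hrsub (mem_ball'.2 hyd))
    obtain ⟨c₀, hc₀d, hc₀⟩ := climb hAclosed hAne hreach hδ0 hδρ x hx0
    have hc₀K : c₀ ∈ Kset := hc₀
    obtain ⟨c, hcT, hcd⟩ := by
      have := htcov hc₀K
      simp only [mem_iUnion, exists_prop] at this
      exact this
    have hωc : ω ∈ ⋃ i, X i ⁻¹' (B c) := by
      have := mem_iInter₂.1 hω c ((hTmem c).2 hcT)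
      exact this
    obtain ⟨i, hi⟩ := mem_iUnion.1 hωc
    refine mem_iUnion.2 ⟨i, ?_⟩
    rw [mem_closedBall]
    have h1 : dist (X i ω) c ≤ δ / 2 := by
      have := mem_preimage.1 hi
      rwa [hB, mem_closedBall] at this
    have h2 : dist c₀ c < δ / 2 := mem_ball.1 hcd
    calc dist x (X i ω) ≤ dist x c₀ + dist c₀ (X i ω) := dist_triangle _ _ _
      _ ≤ dist x c₀ + (dist c₀ c + dist c (X i ω)) :=
          add_le_add_right (dist_triangle _ _ _) _
      _ ≤ 2 * δ + (δ / 2 + δ / 2) := by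
          rw [dist_comm c (X i ω)] at *
          have := h1
          gcongr
      _ = 3 * δ := by ring
  have hcompl_eq : ∀ c : EuclideanSpace ℝ (Fin n),
      (⋃ i, X i ⁻¹' (B c))ᶜ = ⋂ i, X i ⁻¹' (B c)ᶜ := by
    intro c
    rw [compl_iUnion]
    simp [preimage_compl]
  have hunion : (1:ℝ≥0∞) ≤ P S1 + ∑ c ∈ T, P (⋂ i, X i ⁻¹' (B c)ᶜ) := by
    have hsplit : (univ : Set Ω) ⊆ S1 ∪ ⋃ c ∈ T, (⋃ i, X i ⁻¹' (B c))ᶜ := by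
      intro ω _
      by_cases h : ∀ c ∈ T, ω ∈ ⋃ i, X i ⁻¹' (B c)
      · exact Or.inl (mem_iInter₂.2 h)
      · push_neg at h
        obtain ⟨c, hcT, hc⟩ := h
        exact Or.inr (mem_iUnion₂.2 ⟨c, hcT, hc⟩)
    calc (1:ℝ≥0∞) = P univ := measure_univ.symm
      _ ≤ P (S1 ∪ ⋃ c ∈ T, (⋃ i, X i ⁻¹' (B c))ᶜ) := measure_mono hsplit
      _ ≤ P S1 + P (⋃ c ∈ T, (⋃ i, X i ⁻¹' (B c))ᶜ) := measure_union_le _ _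
      _ ≤ P S1 + ∑ c ∈ T, P ((⋃ i, X i ⁻¹' (B c))ᶜ) :=
          add_le_add_right (measure_biUnion_finset_le _ _) _
      _ = P S1 + ∑ c ∈ T, P (⋂ i, X i ⁻¹' (B c)ᶜ) := by
          congr 1
          exact Finset.sum_congr rfl fun c _ => by rw [hcompl_eq c]
  have hsum_le : ∑ c ∈ T, P (⋂ i, X i ⁻¹' (B c)ᶜ) ≤ T.card * bnd := by
    calc ∑ c ∈ T, P (⋂ i, X i ⁻¹' (B c)ᶜ) ≤ T.card • bnd :=
          Finset.sum_le_card_nsmul T _ bnd hcenter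
      _ = T.card * bnd := by rw [nsmul_eq_mul]
  have hfinal : 1 - (T.card : ℝ≥0∞) * bnd ≤ P S1 := by
    rw [tsub_le_iff_right]
    calc (1:ℝ≥0∞) ≤ P S1 + ∑ c ∈ T, P (⋂ i, X i ⁻¹' (B c)ᶜ) := hunion
      _ ≤ P S1 + T.card * bnd := add_le_add_right hsum_le _
  exact le_trans hfinal (measure_mono hincl)
end

section
/- If A ⊆ ℝⁿ satisfies reach(Aᶜ) > ρ > 0, then the set A equals its morphological opening by the open ball of radius ρ: A = (A ⊖ U(0,ρ)) + U(0,ρ), where A ⊖ F = {x : x + F ⊆ A} and + denotes Minkowski sum. -/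
open MeasureTheory Metric Set
open scoped ENNReal Pointwise

/-- Morphological erosion `A ⊖ F = {x : x + F ⊆ A}`. -/
def erosion {n : ℕ} (A F : Set (EuclideanSpace ℝ (Fin n))) : Set (EuclideanSpace ℝ (Fin n)) :=
  {x | ∀ f ∈ F, x + f ∈ A}

private lemma tube_subset_unp {n : ℕ} {A : Set (EuclideanSpace ℝ (Fin n))} {ρ : ℝ}
    (hreach : ENNReal.ofReal ρ < reach Aᶜ) {x b : EuclideanSpace ℝ (Fin n)}
    (hb : b ∈ Aᶜ) (hxb : dist x b < ρ) : x ∈ Unp Aᶜ := by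
  have h1 : ENNReal.ofReal ρ < reachAt Aᶜ b := lt_of_lt_of_le hreach (biInf_le _ hb)
  obtain ⟨r, hr, hρr⟩ := lt_sSup_iff.mp h1
  apply hr
  change edist x b < r
  rw [edist_dist]
  exact lt_trans ((ENNReal.ofReal_lt_ofReal_iff (lt_of_le_of_lt dist_nonneg hxb)).mpr hxb) hρr

private lemma aux_inner_bound {E p h m θ : ℝ} (hE : m ≤ E) (hm0 : 0 < m) (hh : 0 < h)
    (hθ0 : 0 < θ) (hθ1 : θ < 1)
    (hD2 : E^2 + 2*(h*p) + h^2 ≤ (m + θ*h)^2) : p ≤ θ * m := by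
  nlinarith [mul_pos hh hh, sq_nonneg h, mul_nonneg (mul_nonneg hθ0.le hh.le) hh.le, mul_pos hm0 hh]

private lemma exists_ball_in {n : ℕ} {A : Set (EuclideanSpace ℝ (Fin n))} {ρ : ℝ}
    (hρ : 0 < ρ) (hreach : ENNReal.ofReal ρ < reach Aᶜ) (hcne : Aᶜ.Nonempty)
    {a : EuclideanSpace ℝ (Fin n)} (ha : a ∈ A) :
    ∃ c, dist a c < ρ ∧ ρ ≤ infDist c Aᶜ := by
  set d := infDist a Aᶜ with hddef
  -- d > 0
  have hd0 : 0 < d := by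
    rcases (infDist_nonneg : 0 ≤ d).lt_or_eq with h | h
    · exact h
    · exfalso
      have hac : a ∈ closure Aᶜ := (mem_closure_iff_infDist_zero hcne).mpr h.symm
      obtain ⟨b, hb, hab⟩ := Metric.mem_closure_iff.mp hac ρ hρ
      obtain ⟨y, ⟨hyA, hyd⟩, -⟩ := tube_subset_unp hreach hb hab
      have hy0 : dist a y = 0 := by rw [hyd]; exact h.symm
      have hya : a = y := dist_eq_zero.mp hy0
      exact hyA (hya ▸ ha)
  clear_value d
  by_cases hdρ : ρ ≤ d
  · exact ⟨a, by simpa using hρ, hddef ▸ hdρ⟩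
  push_neg at hdρ
  set θ := 1 - d / (2 * ρ) with hθdef
  have hθhalf : 1/2 < θ := by
    rw [hθdef]
    have : d / (2 * ρ) < 1/2 := by rw [div_lt_iff₀ (by positivity)]; linarith
    linarith
  have hθ1 : θ < 1 := by
    rw [hθdef]
    have : 0 < d / (2 * ρ) := by positivity
    linarith
  clear_value θ
  have hθ0 : (0:ℝ) < θ := by linarith
  set f := fun x => min (infDist x Aᶜ) ρ - θ * dist x a with hfdef
  have hfc : Continuous f := by
    rw [hfdef]
    apply Continuous.sub
    · exact (continuous_infDist_pt _).min continuous_const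
    · exact continuous_const.mul (continuous_id.dist continuous_const)
  clear_value f
  obtain ⟨c, hcK, hmax⟩ := (isCompact_closedBall a (2*ρ)).exists_isMaxOn
    ⟨a, mem_closedBall_self (by positivity)⟩ hfc.continuousOn
  have hfa : f a = d := by
    simp only [hfdef, dist_self, mul_zero, sub_zero]
    rw [← hddef, min_eq_left hdρ.le]
  have hfac : d ≤ f c := hfa ▸ hmax (mem_closedBall_self (by positivity))
  have hkey : ρ ≤ infDist c Aᶜ := by
    by_contra hm
    push_neg at hm
    set m := infDist c Aᶜ with hmdef
    have hfc2 : f c = m - θ * dist c a := by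
      simp only [hfdef]
      rw [← hmdef, min_eq_left hm.le]
    clear_value m
    have hdca : θ * dist c a ≤ m - d := by
      rw [hfc2] at hfac; linarith
    have hdm : d ≤ m := by
      have h1 : 0 ≤ θ * dist c a := mul_nonneg hθ0.le dist_nonneg
      linarith
    have hm0 : 0 < m := lt_of_lt_of_le hd0 hdm
    have hca2 : dist c a ≤ 2 * (ρ - d) := by
      have hprod : 0 ≤ (θ - 1/2) * dist c a :=
        mul_nonneg (by linarith) dist_nonneg
      nlinarith [dist_nonneg (x := c) (y := a)]
    obtain ⟨b', hb', hcb'⟩ := (infDist_lt_iff hcne).mp (hmdef ▸ hm)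
    obtain ⟨b, ⟨hbA, hbd⟩, hbu⟩ := tube_subset_unp hreach hb' hcb'
    rw [← hmdef] at hbd
    set u := m⁻¹ • (c - b) with hudef
    have hcbnorm : ‖c - b‖ = m := by rw [← dist_eq_norm, hbd]
    have hun : ‖u‖ = 1 := by
      rw [hudef, norm_smul, hcbnorm, norm_inv, Real.norm_eq_abs, abs_of_pos hm0,
        inv_mul_cancel₀ hm0.ne']
    have hmu : m • u = c - b := by
      rw [hudef, smul_inv_smul₀ hm0.ne']
    clear_value u
    set h₀ := min d (ρ - m) / 2 with hh₀def
    have hminpos : 0 < min d (ρ - m) := lt_min hd0 (by linarith)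
    have hh₀ : 0 < h₀ := by rw [hh₀def]; positivity
    have hh₀d : h₀ ≤ d := by
      have := min_le_left d (ρ - m); rw [hh₀def]; linarith
    have hh₀m : h₀ < ρ - m := by
      have := min_le_right d (ρ - m); rw [hh₀def]; linarith
    clear_value h₀
    set hs : ℕ → ℝ := fun k => h₀ / (k + 1) with hhsdef
    have hhs_pos : ∀ k, 0 < hs k := by
      intro k
      simp only [hhsdef]
      positivity
    have hhs_le : ∀ k, hs k ≤ h₀ := by
      intro k
      simp only [hhsdef]
      apply div_le_self hh₀.le
      have : (0:ℝ) ≤ (k:ℝ) := Nat.cast_nonneg k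
      linarith
    have hhs0 : Filter.Tendsto hs Filter.atTop (nhds 0) := by
      have h1 := tendsto_const_div_atTop_nhds_zero_nat h₀
      have h2 := h1.comp (Filter.tendsto_add_atTop_nat 1)
      refine h2.congr ?_
      intro k
      simp [hhsdef, Function.comp]
    clear_value hs
    set x : ℕ → EuclideanSpace ℝ (Fin n) := fun k => c + hs k • u with hxdef
    have hxc : ∀ k, dist (x k) c = hs k := by
      intro k
      simp only [hxdef]
      rw [dist_eq_norm]
      simp only [add_sub_cancel_left, norm_smul, hun, mul_one, Real.norm_eq_abs,
        abs_of_pos (hhs_pos k)]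
    have hxsub : ∀ k, x k - c = hs k • u := by
      intro k; simp only [hxdef]; abel
    clear_value x
    -- infDist bound at x k from maximality
    have hδx : ∀ k, infDist (x k) Aᶜ ≤ m + θ * hs k := by
      intro k
      have h1 : infDist (x k) Aᶜ ≤ m + hs k := by
        have h2 := infDist_le_infDist_add_dist (x := x k) (y := c) (s := Aᶜ)
        rw [hxc k, ← hmdef] at h2; linarith
      have hxa : dist (x k) a ≤ dist c a + hs k := by
        have := dist_triangle (x k) c a; rw [hxc k] at this; linarith
      have hxK : x k ∈ closedBall a (2*ρ) := by
        rw [mem_closedBall]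
        have := hhs_le k
        linarith
      have hmaxk : f (x k) ≤ f c := hmax hxK
      have hminx : min (infDist (x k) Aᶜ) ρ = infDist (x k) Aᶜ := by
        apply min_eq_left
        have := hhs_le k; linarith
      rw [hfc2] at hmaxk
      simp only [hfdef] at hmaxk
      rw [hminx] at hmaxk
      have hprod : θ * dist (x k) a ≤ θ * (dist c a + hs k) :=
        mul_le_mul_of_nonneg_left hxa hθ0.le
      nlinarith [hmaxk, hprod]
    -- x k is in Unp
    have hxUnp : ∀ k, x k ∈ Unp Aᶜ := by
      intro k
      apply tube_subset_unp hreach hbA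
      have h1 := dist_triangle (x k) c b
      rw [hxc k, hbd] at h1
      have := hhs_le k
      linarith
    have hex : ∀ k : ℕ, ∃ y, y ∈ Aᶜ ∧ dist (x k) y = infDist (x k) Aᶜ :=
      fun k => (hxUnp k).exists
    choose cs hcsA hcsd using hex
    -- inner product lower bound
    have hinner : ∀ k, m * (1 - θ) ≤ (inner ℝ u (cs k - b) : ℝ) := by
      intro k
      have hE : m ≤ ‖c - cs k‖ := by
        rw [← dist_eq_norm, hmdef]
        exact infDist_le_dist_of_mem (hcsA k)
      have hD : ‖c - cs k + hs k • u‖ ≤ m + θ * hs k := by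
        have hx1 : x k - cs k = c - cs k + hs k • u := by
          have := hxsub k
          have h2 : x k - cs k = (x k - c) + (c - cs k) := by abel
          rw [h2, this]; abel
        rw [← hx1, ← dist_eq_norm, hcsd k]
        exact hδx k
      have hexp : ‖c - cs k + hs k • u‖^2 =
          ‖c - cs k‖^2 + 2 * (hs k * (inner ℝ (c - cs k) u : ℝ)) + (hs k)^2 := by
        rw [norm_add_sq_real, real_inner_smul_right, norm_smul, hun, mul_one,
          Real.norm_eq_abs, abs_of_pos (hhs_pos k)]
      have hD2 : ‖c - cs k + hs k • u‖^2 ≤ (m + θ * hs k)^2 :=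
        pow_le_pow_left₀ (norm_nonneg _) hD 2
      rw [hexp] at hD2
      have hp : (inner ℝ (c - cs k) u : ℝ) ≤ θ * m :=
        aux_inner_bound hE hm0 (hhs_pos k) hθ0 hθ1 hD2
      have hub : (inner ℝ u (c - b) : ℝ) = m := by
        rw [← hmu, real_inner_smul_right, real_inner_self_eq_norm_sq, hun]
        ring
      have hsplit : (inner ℝ u (cs k - b) : ℝ) = (inner ℝ u (c - b) : ℝ) - (inner ℝ u (c - cs k) : ℝ) := by
        rw [← inner_sub_right]
        congr 1
        abel
      rw [hsplit, hub, real_inner_comm]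
      linarith [hp]
    -- compactness
    have hbnd : ∀ k, dist c (cs k) ≤ m + 2 * hs k := by
      intro k
      have h1 := dist_triangle c (x k) (cs k)
      have h2 : dist (x k) (cs k) ≤ m + θ * hs k := by rw [hcsd k]; exact hδx k
      have h4 : θ * hs k ≤ hs k := by
        have := mul_le_mul_of_nonneg_right hθ1.le (hhs_pos k).le
        linarith
      have h5 : dist c (x k) = hs k := by rw [dist_comm]; exact hxc k
      linarith
    have hmem : ∀ k, cs k ∈ closedBall c (m + 2 * h₀) := by
      intro k
      rw [mem_closedBall, dist_comm]
      have := hbnd k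
      have := hhs_le k
      linarith
    obtain ⟨cl, hclK, φ, hφ, hconv⟩ := (isCompact_closedBall c (m + 2*h₀)).tendsto_subseq hmem
    have hhsφ : Filter.Tendsto (fun j => hs (φ j)) Filter.atTop (nhds 0) :=
      hhs0.comp hφ.tendsto_atTop
    have hclcl : cl ∈ closure Aᶜ :=
      mem_closure_of_tendsto hconv (Filter.Eventually.of_forall fun j => hcsA (φ j))
    have hclA : cl ∈ Aᶜ := by
      obtain ⟨b'', hb'', hd''⟩ := Metric.mem_closure_iff.mp hclcl ρ hρ
      obtain ⟨y, ⟨hyA, hyd⟩, -⟩ := tube_subset_unp hreach hb'' hd''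
      have h0 : infDist cl Aᶜ = 0 := (mem_closure_iff_infDist_zero hcne).mp hclcl
      have hz : dist cl y = 0 := by rw [hyd, h0]
      have hzz : cl = y := dist_eq_zero.mp hz
      rwa [hzz]
    have htd : Filter.Tendsto (fun j => dist c (cs (φ j))) Filter.atTop (nhds (dist c cl)) :=
      Filter.Tendsto.dist tendsto_const_nhds hconv
    have hlow : m ≤ dist c cl :=
      ge_of_tendsto' htd (fun j => by
        rw [hmdef]; exact infDist_le_dist_of_mem (hcsA (φ j)))
    have hup : dist c cl ≤ m := by
      have hb2 : Filter.Tendsto (fun j => m + 2 * hs (φ j)) Filter.atTop (nhds (m + 2 * 0)) :=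
        tendsto_const_nhds.add (hhsφ.const_mul 2)
      have h3 := le_of_tendsto_of_tendsto' htd hb2 (fun j => hbnd (φ j))
      simpa using h3
    have hcl_eq : cl = b := hbu cl ⟨hclA, by rw [← hmdef]; exact le_antisymm hup hlow⟩
    have hti : Filter.Tendsto (fun j => (inner ℝ u (cs (φ j) - b) : ℝ)) Filter.atTop
        (nhds (inner ℝ u (cl - b))) :=
      Filter.Tendsto.inner tendsto_const_nhds (hconv.sub tendsto_const_nhds)
    have hfin : m * (1 - θ) ≤ (inner ℝ u (cl - b) : ℝ) :=
      ge_of_tendsto' hti (fun j => hinner (φ j))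
    rw [hcl_eq, sub_self, inner_zero_right] at hfin
    have hmθ : 0 < m * (1 - θ) := mul_pos hm0 (by linarith)
    linarith
  -- conclude
  have hfcρ : f c = ρ - θ * dist c a := by
    simp only [hfdef]
    rw [min_eq_right hkey]
  have hca : θ * dist c a ≤ ρ - d := by rw [hfcρ] at hfac; linarith
  have hθρ : ρ - d < θ * ρ := by
    have h2 : θ * ρ = ρ - d/2 := by rw [hθdef]; field_simp
    rw [h2]; linarith
  have hfinal : dist c a < ρ := by nlinarith [dist_nonneg (x := c) (y := a)]
  exact ⟨c, by rwa [dist_comm], hkey⟩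

theorem opening_of_positive_reach {n : ℕ}
    (A : Set (EuclideanSpace ℝ (Fin n)))
    (ρ : ℝ) (hρ : 0 < ρ) (hreach : ENNReal.ofReal ρ < reach Aᶜ) :
    A = erosion A (Metric.ball (0 : EuclideanSpace ℝ (Fin n)) ρ) +
        Metric.ball (0 : EuclideanSpace ℝ (Fin n)) ρ := by
  apply Set.Subset.antisymm
  · intro a ha
    by_cases hcne : Aᶜ.Nonempty
    · obtain ⟨c, hac, hball⟩ := exists_ball_in hρ hreach hcne ha
      refine Set.mem_add.mpr ⟨c, ?_, a - c, ?_, by abel⟩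
      · intro g hg
        by_contra hcg
        have h1 : infDist c Aᶜ ≤ dist c (c + g) := infDist_le_dist_of_mem hcg
        have h2 : dist c (c + g) = ‖g‖ := by
          rw [dist_eq_norm]; simp
        rw [mem_ball, dist_zero_right] at hg
        rw [h2] at h1
        linarith
      · rw [mem_ball, dist_zero_right, ← dist_eq_norm]
        exact hac
    · rw [Set.not_nonempty_iff_eq_empty, compl_empty_iff] at hcne
      refine Set.mem_add.mpr ⟨a, ?_, 0, mem_ball_self hρ, add_zero a⟩
      intro g _
      rw [hcne]; trivial
  · rintro x hx
    obtain ⟨e, he, g, hg, rfl⟩ := Set.mem_add.mp hx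
    exact he g hg
end

section
/- There exists a bounded open set E ⊆ ℝ² and δ > 0 such that E equals its opening by the open ball of radius δ (E = E ∘ U(0,δ)) but reach(Eᶜ) < δ. Specifically, for x, y ∈ ℝ² with ‖x - y‖ = 2R and any δ > R, the set E = U(x,δ) ∪ U(y,δ) has this property. -/
open MeasureTheory Metric Set
open scoped ENNReal Pointwise

/-- Morphological opening `A ∘ F = (A ⊖ F) + F`. -/
def opening {n : ℕ} (A F : Set (EuclideanSpace ℝ (Fin n))) : Set (EuclideanSpace ℝ (Fin n)) :=
  erosion A F + F

noncomputable def perp (y : EuclideanSpace ℝ (Fin 2)) : EuclideanSpace ℝ (Fin 2) :=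
  (WithLp.equiv 2 (Fin 2 → ℝ)).symm ![-(y 1), y 0]

lemma inner_perp_self (y : EuclideanSpace ℝ (Fin 2)) : (inner ℝ y (perp y) : ℝ) = 0 := by
  simp [perp, PiLp.inner_apply, Fin.sum_univ_two]; ring

lemma norm_perp (y : EuclideanSpace ℝ (Fin 2)) : ‖perp y‖ = ‖y‖ := by
  rw [EuclideanSpace.norm_eq, EuclideanSpace.norm_eq]
  simp [perp, Fin.sum_univ_two]
  ring_nf

set_option maxHeartbeats 1000000 in
lemma reach_aux (R δ : ℝ) (hR : 0 < R) (hδ : R < δ)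
    (x y w : EuclideanSpace ℝ (Fin 2)) (hxy : ‖x - y‖ = 2 * R)
    (hnw : ‖w‖ = 2 * R) (hwxy : (inner ℝ (x - y) w : ℝ) = 0) :
    reach (Metric.ball x δ ∪ Metric.ball y δ)ᶜ < ENNReal.ofReal δ := by
  have hδ0 : (0:ℝ) < δ := hR.trans hδ
  set E := Metric.ball x δ ∪ Metric.ball y δ with hE
  obtain ⟨e, he⟩ : ∃ e : EuclideanSpace ℝ (Fin 2), e = (1/2 : ℝ) • (y - x) := ⟨_, rfl⟩
  obtain ⟨m, hm⟩ : ∃ m : EuclideanSpace ℝ (Fin 2), m = x + e := ⟨_, rfl⟩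
  have hed : e = -((1/2 : ℝ) • (x - y)) := by rw [he]; module
  have hne : ‖e‖ = R := by
    rw [hed, norm_neg, norm_smul, hxy]
    simp
  have hmx : m - x = e := by rw [hm]; abel
  have hmy : m - y = -e := by rw [hm, he]; module
  have hwe : (inner ℝ e w : ℝ) = 0 := by
    rw [hed, inner_neg_left, real_inner_smul_left, hwxy]; ring
  obtain ⟨h, hh⟩ : ∃ h : ℝ, h = Real.sqrt (δ^2 - R^2) := ⟨_, rfl⟩
  have hh2 : h^2 = δ^2 - R^2 := by rw [hh]; exact Real.sq_sqrt (by nlinarith)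
  have hhpos : 0 < h := by rw [hh]; exact Real.sqrt_pos.mpr (by nlinarith)
  have hhδ : h < δ := by
    rw [hh]
    exact (Real.sqrt_lt' hδ0).mpr (by nlinarith)
  obtain ⟨t, ht⟩ : ∃ t : ℝ, t = h / (2 * R) := ⟨_, rfl⟩
  have htpos : 0 < t := by rw [ht]; exact div_pos hhpos (by linarith)
  have htw : ‖t • w‖ = h := by
    rw [norm_smul, hnw, Real.norm_eq_abs, abs_of_pos htpos, ht]
    field_simp
  obtain ⟨c₁, hc₁⟩ : ∃ c : EuclideanSpace ℝ (Fin 2), c = m + t • w := ⟨_, rfl⟩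
  obtain ⟨c₂, hc₂⟩ : ∃ c : EuclideanSpace ℝ (Fin 2), c = m - t • w := ⟨_, rfl⟩
  have hwtw : (inner ℝ e (t • w) : ℝ) = 0 := by
    rw [real_inner_smul_right, hwe]; ring
  have hsq : ∀ v : EuclideanSpace ℝ (Fin 2), ‖v‖ = R → (inner ℝ v (t • w) : ℝ) = 0 →
      ‖v + t • w‖ = δ ∧ ‖v - t • w‖ = δ := by
    intro v hv hvw
    have h1 : ‖v + t • w‖^2 = δ^2 := by
      rw [norm_add_sq_real, hv, htw, hvw]; linarith
    have h2 : ‖v - t • w‖^2 = δ^2 := by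
      rw [norm_sub_sq_real, hv, htw, hvw]; linarith
    constructor
    · rw [← Real.sqrt_sq (norm_nonneg (v + t • w)), h1, Real.sqrt_sq hδ0.le]
    · rw [← Real.sqrt_sq (norm_nonneg (v - t • w)), h2, Real.sqrt_sq hδ0.le]
  have hsqe := hsq e hne hwtw
  have hsqe' := hsq (-e) (by rw [norm_neg, hne]) (by rw [inner_neg_left, hwtw]; ring)
  have hcx1 : c₁ - x = e + t • w := by rw [hc₁, ← hmx]; abel
  have hcy1 : c₁ - y = -e + t • w := by rw [hc₁, ← hmy]; abel
  have hcx2 : c₂ - x = e - t • w := by rw [hc₂, ← hmx]; abel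
  have hcy2 : c₂ - y = -e - t • w := by rw [hc₂, ← hmy]; abel
  have key1 : ‖c₁ - x‖ = δ ∧ ‖c₁ - y‖ = δ :=
    ⟨by rw [hcx1]; exact hsqe.1, by rw [hcy1]; exact hsqe'.1⟩
  have key2 : ‖c₂ - x‖ = δ ∧ ‖c₂ - y‖ = δ :=
    ⟨by rw [hcx2]; exact hsqe.2, by rw [hcy2]; exact hsqe'.2⟩
  have hmem : ∀ c : EuclideanSpace ℝ (Fin 2), ‖c - x‖ = δ → ‖c - y‖ = δ → c ∈ Eᶜ := by
    intro c h1 h2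
    simp only [hE, mem_compl_iff, mem_union, mem_ball, dist_eq_norm, not_or, not_lt]
    exact ⟨le_of_eq h1.symm, le_of_eq h2.symm⟩
  have hcE1 : c₁ ∈ Eᶜ := hmem c₁ key1.1 key1.2
  have hcE2 : c₂ ∈ Eᶜ := hmem c₂ key2.1 key2.2
  have hd1 : dist m c₁ = h := by
    rw [dist_eq_norm, hc₁, show m - (m + t • w) = -(t • w) by abel, norm_neg, htw]
  have hd2 : dist m c₂ = h := by
    rw [dist_eq_norm, hc₂, show m - (m - t • w) = t • w by abel, htw]
  have hball : Metric.ball m h ⊆ E := by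
    intro z hz
    rw [mem_ball, dist_eq_norm] at hz
    have hzx : z - x = (z - m) + e := by rw [← hmx]; abel
    have hzy : z - y = (z - m) + -e := by rw [← hmy]; abel
    rcases le_or_gt (inner ℝ (z - m) e : ℝ) 0 with hle | hlt
    · left
      rw [mem_ball, dist_eq_norm]
      have hzm : ‖z - m‖^2 < h^2 := by
        exact pow_lt_pow_left₀ hz (norm_nonneg (z - m)) (by norm_num)
      have hfin : ‖z - x‖^2 < δ^2 := by
        rw [hzx, norm_add_sq_real, hne]; linarith
      exact lt_of_pow_lt_pow_left₀ 2 hδ0.le hfin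
    · right
      rw [mem_ball, dist_eq_norm]
      have hzm : ‖z - m‖^2 < h^2 := by
        exact pow_lt_pow_left₀ hz (norm_nonneg (z - m)) (by norm_num)
      have hfin : ‖z - y‖^2 < δ^2 := by
        rw [hzy, norm_add_sq_real, norm_neg, hne, inner_neg_right]; linarith
      exact lt_of_pow_lt_pow_left₀ 2 hδ0.le hfin
  have hEc : (Eᶜ : Set (EuclideanSpace ℝ (Fin 2))).Nonempty := ⟨c₁, hcE1⟩
  have hinf : Metric.infDist m Eᶜ = h := by
    apply le_antisymm
    · calc Metric.infDist m Eᶜ ≤ dist m c₁ := Metric.infDist_le_dist_of_mem (hcE1)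
        _ = h := hd1
    · by_contra hcon
      push_neg at hcon
      obtain ⟨z, hzE, hzd⟩ := (Metric.infDist_lt_iff hEc).mp hcon
      exact hzE (hball (by rwa [mem_ball, dist_comm]))
  have hmnot : m ∉ Unp Eᶜ := by
    rintro ⟨a, _, huniq⟩
    have h1 : c₁ = a := huniq c₁ ⟨hcE1, by rw [hd1, hinf]⟩
    have h2 : c₂ = a := huniq c₂ ⟨hcE2, by rw [hd2, hinf]⟩
    have hcc : c₁ = c₂ := h1.trans h2.symm
    have hne' : ‖c₁ - c₂‖ = 2 * t * (2 * R) := by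
      rw [hc₁, hc₂, show m + t • w - (m - t • w) = (2 * t) • w by module, norm_smul,
        Real.norm_eq_abs, abs_of_pos (by linarith), hnw]
    rw [hcc, sub_self, norm_zero] at hne'
    nlinarith
  have step1 : reach Eᶜ ≤ reachAt Eᶜ c₁ := iInf₂_le c₁ (hcE1)
  have step2 : reachAt Eᶜ c₁ ≤ ENNReal.ofReal h := by
    apply sSup_le
    intro r hr
    by_contra hcon
    push_neg at hcon
    apply hmnot
    apply hr
    rw [show m ∈ EMetric.ball c₁ r ↔ edist m c₁ < r from Iff.rfl, edist_dist, hd1]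
    exact hcon
  calc reach Eᶜ ≤ ENNReal.ofReal h := step1.trans step2
    _ < ENNReal.ofReal δ := by
        rw [ENNReal.ofReal_lt_ofReal_iff hδ0]; exact hhδ

theorem two_balls_opening_but_small_reach
    (R δ : ℝ) (hR : 0 < R) (hδ : R < δ)
    (x y : EuclideanSpace ℝ (Fin 2)) (hxy : ‖x - y‖ = 2 * R) :
    (Metric.ball x δ ∪ Metric.ball y δ) =
        opening (Metric.ball x δ ∪ Metric.ball y δ)
          (Metric.ball (0 : EuclideanSpace ℝ (Fin 2)) δ) ∧
      reach (Metric.ball x δ ∪ Metric.ball y δ)ᶜ < ENNReal.ofReal δ := by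
  set E := Metric.ball x δ ∪ Metric.ball y δ with hE
  constructor
  · apply Subset.antisymm
    · rintro z (hz | hz)
      · have hx0 : x ∈ erosion E (Metric.ball (0 : EuclideanSpace ℝ (Fin 2)) δ) := by
          intro f hf
          exact Or.inl (by
            simpa [mem_ball, dist_eq_norm] using (mem_ball_zero_iff.mp hf))
        have hzf : z - x ∈ Metric.ball (0 : EuclideanSpace ℝ (Fin 2)) δ := by
          rw [mem_ball_zero_iff]
          simpa [dist_eq_norm] using hz
        have : x + (z - x) ∈ opening E (Metric.ball (0 : EuclideanSpace ℝ (Fin 2)) δ) :=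
          Set.add_mem_add hx0 hzf
        simpa using this
      · have hy0 : y ∈ erosion E (Metric.ball (0 : EuclideanSpace ℝ (Fin 2)) δ) := by
          intro f hf
          exact Or.inr (by
            simpa [mem_ball, dist_eq_norm] using (mem_ball_zero_iff.mp hf))
        have hzf : z - y ∈ Metric.ball (0 : EuclideanSpace ℝ (Fin 2)) δ := by
          rw [mem_ball_zero_iff]
          simpa [dist_eq_norm] using hz
        have : y + (z - y) ∈ opening E (Metric.ball (0 : EuclideanSpace ℝ (Fin 2)) δ) :=
          Set.add_mem_add hy0 hzf
        simpa using this
    · rintro z hz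
      obtain ⟨a, ha, f, hf, rfl⟩ := hz
      exact ha f hf
  · exact reach_aux R δ hR hδ x y (perp (x - y)) hxy
      (by rw [norm_perp, hxy]) (inner_perp_self (x - y))
end

section
/- Let U ⊆ ℝⁿ be bounded open with reach(Uᶜ) > ρ > 0, let δ ∈ (0, ρ), and let A ⊆ U be measurable with vol(A) < δⁿ·n^{-n/2}. Then for E = U \ A there exists a finite measurable partition 𝓡_E of E of some cardinality M such that for any i.i.d. uniform sample 𝕏 of N points from E, P(B(𝕏, 3δ) ⊇ E) ≥ 1 - M·exp(-(δⁿ n^{-n/2} - vol(A))·N / vol(E)). -/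
open MeasureTheory Metric Set ProbabilityTheory
open scoped ENNReal

lemma easy_ineq {n : ℕ} {y q z : EuclideanSpace ℝ (Fin n)} (h : dist y q ≤ dist y z) :
    inner ℝ (y - q) (z - q) ≤ ‖z - q‖^2/2 := by
  have h2 : ‖y - q‖^2 ≤ ‖y - z‖^2 := by
    rw [dist_eq_norm, dist_eq_norm] at h
    exact pow_le_pow_left₀ (norm_nonneg _) h 2
  have h3 : y - z = (y - q) - (z - q) := by abel
  have h4 := norm_sub_sq_real (y - q) (z - q)
  rw [h3, h4] at h2
  nlinarith

lemma ball_subset_of_infDist {n : ℕ} {U : Set (EuclideanSpace ℝ (Fin n))} {y : EuclideanSpace ℝ (Fin n)}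
    {δ : ℝ} (h : δ ≤ Metric.infDist y Uᶜ) : ball y δ ⊆ U := by
  intro z hz
  by_contra hzU
  have h1 : Metric.infDist y Uᶜ ≤ dist y z := Metric.infDist_le_dist_of_mem hzU
  have h2 : dist z y < δ := mem_ball.mp hz
  rw [dist_comm] at h2
  linarith

set_option maxHeartbeats 1000000 in
lemma exists_deep_point {n : ℕ} {U : Set (EuclideanSpace ℝ (Fin n))}
    (hUopen : IsOpen U) (hne : Uᶜ.Nonempty)
    {ρ δ : ℝ} (hδ0 : 0 < δ) (hδρ : δ < ρ)
    (hUnp : ∀ a ∈ Uᶜ, ∀ w : EuclideanSpace ℝ (Fin n), dist w a ≤ ρ → w ∈ Unp Uᶜ)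
    {x : EuclideanSpace ℝ (Fin n)} (hx : x ∈ U) :
    ∃ y, dist x y ≤ δ ∧ ball y δ ⊆ U := by
  classical
  have hc : IsClosed (Uᶜ) := hUopen.isClosed_compl
  set d := Metric.infDist x Uᶜ with hd_def
  have hd0 : 0 < d := by
    rw [hd_def, ← IsClosed.notMem_iff_infDist_pos hc hne]
    simpa using hx
  by_cases hcase : δ ≤ d
  · exact ⟨x, by rw [dist_self]; exact hδ0.le, ball_subset_of_infDist hcase⟩
  push_neg at hcase
  set lam := (δ - d)/δ with hlam_def
  have hlamδ : lam * δ = δ - d := by rw [hlam_def]; field_simp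
  have hlam0 : 0 < lam := div_pos (by linarith) hδ0
  have hlam1 : lam < 1 := by rw [hlam_def, div_lt_one hδ0]; linarith
  set C : Set (EuclideanSpace ℝ (Fin n)) :=
    {y | Metric.infDist y Uᶜ ≤ δ ∧ dist y x ≤ δ/lam} with hC_def
  have hCclosed : IsClosed C := by
    apply IsClosed.inter
    · exact isClosed_le (Metric.continuous_infDist_pt _) continuous_const
    · exact isClosed_le (continuous_id.dist continuous_const) continuous_const
  have hCcompact : IsCompact C := by
    refine (isCompact_closedBall x (δ/lam)).of_isClosed_subset hCclosed ?_
    intro y hy; exact mem_closedBall.mpr hy.2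
  have hxC : x ∈ C := ⟨le_of_lt hcase, by simp [dist_self]; positivity⟩
  have hGcont : Continuous fun y : EuclideanSpace ℝ (Fin n) =>
      Metric.infDist y Uᶜ - lam * dist y x :=
    (Metric.continuous_infDist_pt _).sub
      (continuous_const.mul (continuous_id.dist continuous_const))
  obtain ⟨y, hyC, hmax⟩ := hCcompact.exists_isMaxOn ⟨x, hxC⟩ hGcont.continuousOn
  have hGx : d ≤ Metric.infDist y Uᶜ - lam * dist y x := by
    have h := isMaxOn_iff.mp hmax x hxC
    simpa [hd_def] using h
  set ds := Metric.infDist y Uᶜ with hds_def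
  have hdist_nonneg : 0 ≤ dist y x := dist_nonneg
  have hds_pos : 0 < ds := by
    have hh := mul_nonneg hlam0.le hdist_nonneg
    linarith
  have hdsδ : ds ≤ δ := hyC.1
  -- main claim : ds = δ
  have hclaim : ds = δ := by
    by_contra hne'
    have hlt : ds < δ := lt_of_le_of_ne hdsδ hne'
    have hyxlt : dist y x < δ := by
      by_contra hcon
      push_neg at hcon
      have := mul_le_mul_of_nonneg_left hcon hlam0.le
      linarith
    obtain ⟨q, hqUc, hq⟩ := hc.exists_infDist_eq_dist hne y
    have hdsq : dist y q = ds := hq.symm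
    have hyq : y ≠ q := by
      intro h; rw [h, dist_self] at hdsq; exact absurd hdsq hds_pos.ne
    set u : EuclideanSpace ℝ (Fin n) := (ds)⁻¹ • (y - q) with hu_def
    have hnormyq : ‖y - q‖ = ds := by rw [← dist_eq_norm]; exact hdsq
    have hu_norm : ‖u‖ = 1 := by
      rw [hu_def, norm_smul, hnormyq, Real.norm_eq_abs, abs_inv, abs_of_pos hds_pos]
      exact inv_mul_cancel₀ hds_pos.ne'
    have hyunp : y ∈ Unp Uᶜ := hUnp q hqUc y (by rw [hdsq]; linarith)
    -- epsilon claim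
    have hec : ∀ ε > (0:ℝ), ∃ η₀ > (0:ℝ), ∀ η : ℝ, 0 < η → η ≤ η₀ →
        ∀ z ∈ Uᶜ, dist (y + η • u) z ≤ ds + η → dist z q ≤ ε := by
      intro ε hε
      by_contra hcon
      push_neg at hcon
      have hcon' : ∀ k : ℕ, ∃ η : ℝ, (0 < η ∧ η ≤ 1/((k:ℝ)+1)) ∧ ∃ z, z ∈ Uᶜ ∧
          dist (y + η • u) z ≤ ds + η ∧ ε < dist z q := by
        intro k
        obtain ⟨η, hη1, hη2, z, hz1, hz2, hz3⟩ := hcon (1/((k:ℝ)+1)) (by positivity)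
        exact ⟨η, ⟨hη1, hη2⟩, z, hz1, hz2, hz3⟩
      choose η hη z hz1 hz2 hz3 using hcon'
      have hηpos : ∀ k, 0 < η k := fun k => (hη k).1
      have hηle : ∀ k, η k ≤ 1/((k:ℝ)+1) := fun k => (hη k).2
      have hηdist : ∀ k, dist (y + η k • u) y = η k := by
        intro k
        simp [dist_eq_norm, norm_smul, abs_of_pos (hηpos k), hu_norm]
      have hzK : ∀ k, z k ∈ Uᶜ ∩ closedBall y (ds + 2) := by
        intro k
        refine ⟨hz1 k, mem_closedBall.mpr ?_⟩
        have h1 : dist (z k) (y + η k • u) ≤ ds + η k := by rw [dist_comm]; exact hz2 k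
        have h3 : η k ≤ 1 := le_trans (hηle k) (by
          rw [div_le_one (by positivity)]
          linarith [Nat.cast_nonneg (α := ℝ) k])
        calc dist (z k) y ≤ dist (z k) (y + η k • u) + dist (y + η k • u) y :=
              dist_triangle _ _ _
          _ ≤ (ds + η k) + η k := by rw [hηdist k]; linarith
          _ ≤ ds + 2 := by linarith
      have hKcomp : IsCompact (Uᶜ ∩ closedBall y (ds + 2)) :=
        (isCompact_closedBall y (ds + 2)).inter_left hc
      obtain ⟨zl, hzlK, φ, hφ, hφtend⟩ := hKcomp.tendsto_subseq hzK
      have hηtend : Filter.Tendsto (fun k => η (φ k)) Filter.atTop (nhds 0) := by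
        refine squeeze_zero (fun k => (hηpos _).le) (fun k => hηle (φ k)) ?_
        exact tendsto_one_div_add_atTop_nhds_zero_nat.comp hφ.tendsto_atTop
      have hdisttend : Filter.Tendsto (fun k => dist y (z (φ k))) Filter.atTop
          (nhds (dist y zl)) := tendsto_const_nhds.dist hφtend
      have hle : dist y zl ≤ ds := by
        have hlim : Filter.Tendsto (fun k => ds + 2 * η (φ k)) Filter.atTop (nhds ds) := by
          have := (tendsto_const_nhds (x := ds) (f := Filter.atTop (α := ℕ))).add
            (hηtend.const_mul 2)
          simpa using this
        refine le_of_tendsto_of_tendsto' hdisttend hlim ?_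
        intro k
        calc dist y (z (φ k)) ≤ dist y (y + η (φ k) • u) + dist (y + η (φ k) • u) (z (φ k)) :=
              dist_triangle _ _ _
          _ ≤ η (φ k) + (ds + η (φ k)) := by
              refine add_le_add ?_ (hz2 _)
              rw [dist_comm]; rw [hηdist (φ k)]
          _ = ds + 2 * η (φ k) := by ring
      have hzlnear : dist y zl = Metric.infDist y Uᶜ :=
        le_antisymm (by rw [← hds_def]; exact hle) (Metric.infDist_le_dist_of_mem hzlK.1)
      have hzlq : zl = q := by
        obtain ⟨a, ha, hauniq⟩ := hyunp
        rw [hauniq zl ⟨hzlK.1, hzlnear⟩, hauniq q ⟨hqUc, hq.symm⟩]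
      have hεle : ε ≤ dist zl q := by
        have htd : Filter.Tendsto (fun k => dist (z (φ k)) q) Filter.atTop (nhds (dist zl q)) :=
          hφtend.dist tendsto_const_nhds
        exact le_of_tendsto_of_tendsto' tendsto_const_nhds htd (fun k => (hz3 (φ k)).le)
      rw [hzlq, dist_self] at hεle
      linarith
    -- pick ε and η
    set c₀ := ds * (1 - lam) with hc₀_def
    have hc₀pos : 0 < c₀ := mul_pos hds_pos (by linarith)
    obtain ⟨η₀, hη₀pos, hη₀⟩ := hec (Real.sqrt (ds * c₀ / 2)) (by positivity)
    have hdlam : 0 < δ/lam - δ := by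
      rw [sub_pos, lt_div_iff₀ hlam0]
      have hh := mul_lt_mul_of_pos_left hlam1 hδ0
      linarith
    set η := min (min η₀ (δ - ds)) (δ/lam - δ) with hη_def
    have hηpos : 0 < η := lt_min (lt_min hη₀pos (by linarith)) hdlam
    have hηη₀ : η ≤ η₀ := le_trans (min_le_left _ _) (min_le_left _ _)
    have hetadds : η ≤ δ - ds := le_trans (min_le_left _ _) (min_le_right _ _)
    have hetadlam : η ≤ δ/lam - δ := min_le_right _ _
    set y' := y + η • u with hy'_def
    have hy'q : y' - q = (1 + η/ds) • (y - q) := by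
      rw [hy'_def, hu_def, smul_smul]
      have hh : η * ds⁻¹ = η / ds := by ring
      rw [hh]
      module
    have hcoef : (0:ℝ) < 1 + η/ds := by positivity
    have hy'q_dist : dist y' q = ds + η := by
      rw [dist_eq_norm, hy'q, norm_smul, hnormyq, Real.norm_eq_abs, abs_of_pos hcoef]
      field_simp
    have hy'y : dist y' y = η := by
      simp [hy'_def, dist_eq_norm, norm_smul, abs_of_pos hηpos, hu_norm]
    have hinfy' : Metric.infDist y' Uᶜ ≤ ds + η := by
      rw [← hy'q_dist]; exact Metric.infDist_le_dist_of_mem hqUc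
    have hdy'x : dist y' x ≤ dist y x + η := by
      calc dist y' x ≤ dist y' y + dist y x := dist_triangle _ _ _
        _ ≤ η + dist y x := by rw [hy'y]
        _ = dist y x + η := by ring
    have hy'C : y' ∈ C := by
      constructor
      · exact le_trans hinfy' (by linarith)
      · refine le_trans hdy'x ?_
        linarith
    have hG' : Metric.infDist y' Uᶜ - lam * dist y' x ≤ ds - lam * dist y x := by
      have h := isMaxOn_iff.mp hmax y' hy'C
      simpa using h
    have hinf_up : Metric.infDist y' Uᶜ ≤ ds + lam * η := by
      have hh := mul_le_mul_of_nonneg_left hdy'x hlam0.le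
      linarith
    obtain ⟨zz, hzzUc, hzz⟩ := hc.exists_infDist_eq_dist hne y'
    have hzzdist : dist y' zz = Metric.infDist y' Uᶜ := hzz.symm
    have he : dist zz q ≤ Real.sqrt (ds * c₀ / 2) := by
      refine hη₀ η hηpos hηη₀ zz hzzUc ?_
      rw [← hy'_def, hzzdist]; exact hinfy'
    have he2 : (dist zz q)^2 ≤ ds * c₀ / 2 := by
      calc (dist zz q)^2 ≤ (Real.sqrt (ds * c₀ / 2))^2 := pow_le_pow_left₀ dist_nonneg he 2
        _ = ds * c₀ / 2 := Real.sq_sqrt (by positivity)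
    -- the quadratic inequality
    have hIy : inner ℝ (y - q) (zz - q) ≤ (dist zz q)^2/2 := by
      have hd1 : dist y q ≤ dist y zz := by
        rw [hdsq, hds_def]; exact Metric.infDist_le_dist_of_mem hzzUc
      have := easy_ineq hd1
      rwa [← dist_eq_norm] at this
    have e1 : y' - zz = ((1 + η/ds) • (y - q)) - (zz - q) := by
      rw [← hy'q]; abel
    have e2 := norm_sub_sq_real ((1 + η/ds) • (y - q)) (zz - q)
    have e3 : inner ℝ ((1 + η/ds) • (y - q)) (zz - q) = (1 + η/ds) * inner ℝ (y - q) (zz - q) :=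
      real_inner_smul_left _ _ _
    have e4 : ‖(1 + η/ds) • (y - q)‖ = ds + η := by
      rw [norm_smul, hnormyq, Real.norm_eq_abs, abs_of_pos hcoef]; field_simp
    have e5 : (dist y' zz)^2 = (ds + η)^2
        - 2*(1 + η/ds) * inner ℝ (y - q) (zz - q) + (dist zz q)^2 := by
      rw [dist_eq_norm, e1, e2, e3, e4, dist_eq_norm]
      ring
    have hmul : 2 * (ds + η) * inner ℝ (y - q) (zz - q) ≤ (ds + η) * (dist zz q)^2 := by
      have h0 : (0:ℝ) ≤ 2 * (ds + η) := by positivity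
      have := mul_le_mul_of_nonneg_left hIy h0
      calc 2 * (ds + η) * inner ℝ (y - q) (zz - q) ≤ 2 * (ds + η) * ((dist zz q)^2/2) := this
        _ = (ds + η) * (dist zz q)^2 := by ring
    have hdd : ds * (η / ds) = η := by rw [mul_comm, div_mul_cancel₀ _ hds_pos.ne']
    have hdscoef : ds * (2 * (1 + η/ds)) = 2 * (ds + η) := by
      calc ds * (2 * (1 + η/ds)) = 2*ds + 2*(ds * (η/ds)) := by ring
        _ = 2*ds + 2*η := by rw [hdd]
        _ = 2*(ds + η) := by ring
    have eq6 : ds * (dist y' zz)^2 = ds * (ds + η)^2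
        - (ds * (2 * (1 + η/ds))) * inner ℝ (y - q) (zz - q) + ds * (dist zz q)^2 := by
      rw [e5]; ring
    rw [hdscoef] at eq6
    have key : ds * (dist y' zz)^2 ≥ ds * (ds + η)^2 - η * (dist zz q)^2 := by
      linarith [hmul, eq6]
    have hup : (dist y' zz)^2 ≤ (ds + lam * η)^2 := by
      have h1 : dist y' zz ≤ ds + lam * η := by rw [hzzdist]; exact hinf_up
      exact pow_le_pow_left₀ dist_nonneg h1 2
    have hup' : ds * (dist y' zz)^2 ≤ ds * (ds + lam * η)^2 :=
      mul_le_mul_of_nonneg_left hup hds_pos.le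
    have hee : η * (dist zz q)^2 ≤ η * (ds * (ds * (1 - lam)) / 2) := by
      have := mul_le_mul_of_nonneg_left he2 hηpos.le
      rw [hc₀_def] at this
      linarith
    have hlamsq : (0:ℝ) ≤ 1 - lam^2 := by
      have hh : lam * lam < lam * 1 := mul_lt_mul_of_pos_left hlam1 hlam0
      have h2 : lam^2 < 1 := by rw [pow_two]; linarith
      linarith
    have hpos1 : 0 < ds * ds * η * (1 - lam) :=
      mul_pos (mul_pos (mul_pos hds_pos hds_pos) hηpos) (by linarith)
    have hpos2 : (0:ℝ) ≤ ds * η^2 * (1 - lam^2) :=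
      mul_nonneg (mul_nonneg hds_pos.le (sq_nonneg η)) hlamsq
    linarith [key, hup', hee, hpos1, hpos2]
  -- use the claim
  refine ⟨y, ?_, ball_subset_of_infDist (le_of_eq hclaim.symm)⟩
  rw [dist_comm]
  have h1 : lam * dist y x ≤ ds - d := by linarith
  have h2 : ds - d = lam * δ := by rw [hclaim, hlamδ]
  rw [h2] at h1
  exact (mul_le_mul_iff_right₀ hlam0).mp h1



section Aux
open MeasureTheory Metric Set

variable {n : ℕ}

lemma unp_of_reach {A : Set (EuclideanSpace ℝ (Fin n))} {ρ : ℝ}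
    (h : ENNReal.ofReal ρ < reach A) :
    ∀ a ∈ A, ∀ w : EuclideanSpace ℝ (Fin n), dist w a ≤ ρ → w ∈ Unp A := by
  intro a ha w hw
  have h1 : ENNReal.ofReal ρ < reachAt A a := h.trans_le (iInf₂_le a ha)
  obtain ⟨r, hrS, hr⟩ := lt_sSup_iff.mp h1
  apply hrS
  have : edist w a ≤ ENNReal.ofReal ρ := by
    rw [edist_dist]
    exact ENNReal.ofReal_le_ofReal hw
  exact EMetric.mem_ball.mpr (lt_of_le_of_lt this hr)

/-- grid cube -/
def cubeSet (s : ℝ) (k : Fin n → ℤ) : Set (EuclideanSpace ℝ (Fin n)) :=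
  {z | ∀ i, (k i : ℝ) * s ≤ z i ∧ z i < ((k i : ℝ) + 1) * s}

lemma mem_cubeSet_floor {s : ℝ} (hs : 0 < s) (z : EuclideanSpace ℝ (Fin n)) :
    z ∈ cubeSet s (fun i => ⌊z i / s⌋) := by
  intro i
  constructor
  · calc ((⌊z i / s⌋ : ℝ)) * s ≤ (z i / s) * s :=
        mul_le_mul_of_nonneg_right (Int.floor_le _) hs.le
      _ = z i := div_mul_cancel₀ _ hs.ne'
  · calc z i = (z i / s) * s := (div_mul_cancel₀ _ hs.ne').symm
      _ < ((⌊z i / s⌋ : ℝ) + 1) * s := by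
        refine mul_lt_mul_of_pos_right ?_ hs
        exact_mod_cast Int.lt_floor_add_one (z i / s)
lemma cubeSet_floor_eq {s : ℝ} (hs : 0 < s) {k : Fin n → ℤ} {z : EuclideanSpace ℝ (Fin n)}
    (h : z ∈ cubeSet s k) : k = fun i => ⌊z i / s⌋ := by
  funext i
  obtain ⟨h1, h2⟩ := h i
  symm
  rw [Int.floor_eq_iff]
  constructor
  · rwa [le_div_iff₀ hs]
  · push_cast
    rwa [div_lt_iff₀ hs]

lemma cubeSet_measurable {s : ℝ} (k : Fin n → ℤ) : MeasurableSet (cubeSet (n := n) s k) := by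
  have : cubeSet (n := n) s k =
      ⋂ i, (fun z : EuclideanSpace ℝ (Fin n) => z i) ⁻¹' (Set.Ico ((k i : ℝ) * s) (((k i : ℝ) + 1) * s)) := by
    ext z; simp [cubeSet, Set.mem_Ico]
  rw [this]
  exact MeasurableSet.iInter fun i => (by fun_prop : Measurable fun z : EuclideanSpace ℝ (Fin n) => z i) measurableSet_Ico

lemma cubeSet_dist {s : ℝ} (hs : 0 < s) {k : Fin n → ℤ} {z w : EuclideanSpace ℝ (Fin n)}
    (hz : z ∈ cubeSet s k) (hw : w ∈ cubeSet s k) : dist z w ≤ Real.sqrt n * s := by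
  rw [EuclideanSpace.dist_eq]
  have hb : ∀ i, dist (z i) (w i) ^ 2 ≤ s ^ 2 := by
    intro i
    obtain ⟨hz1, hz2⟩ := hz i
    obtain ⟨hw1, hw2⟩ := hw i
    have h1 : |z i - w i| ≤ s := by
      rw [abs_le]; constructor <;> linarith
    calc dist (z i) (w i) ^ 2 = |z i - w i| ^ 2 := by rw [Real.dist_eq]
      _ ≤ s ^ 2 := by nlinarith [abs_nonneg (z i - w i)]
  calc Real.sqrt (∑ i, dist (z i) (w i) ^ 2) ≤ Real.sqrt (∑ _i : Fin n, s ^ 2) :=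
      Real.sqrt_le_sqrt (Finset.sum_le_sum fun i _ => hb i)
    _ = Real.sqrt ((n : ℝ) * s ^ 2) := by rw [Finset.sum_const, Finset.card_univ, Fintype.card_fin,
        nsmul_eq_mul]
    _ = Real.sqrt n * s := by
      rw [Real.sqrt_mul (Nat.cast_nonneg n), Real.sqrt_sq hs.le]

/-- open box volume -/
lemma box_volume (y : EuclideanSpace ℝ (Fin n)) {r : ℝ} (hr : 0 < r) :
    volume {z : EuclideanSpace ℝ (Fin n) | ∀ i, z i ∈ Set.Ioo (y i - r) (y i + r)}
      = ENNReal.ofReal ((2*r)^n) := by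
  have hmp := EuclideanSpace.volume_preserving_symm_measurableEquiv_toLp (Fin n)
  have heq : ({z : EuclideanSpace ℝ (Fin n) | ∀ i, z i ∈ Set.Ioo (y i - r) (y i + r)}) =
      (MeasurableEquiv.toLp 2 (Fin n → ℝ)).symm ⁻¹'
        (Set.pi Set.univ (fun i => Set.Ioo (y i - r) (y i + r))) := by
    ext z; simp [Set.mem_pi]
  rw [heq, hmp.measure_preimage
    (MeasurableSet.univ_pi (fun i => measurableSet_Ioo)).nullMeasurableSet]
  rw [volume_pi_pi]
  have : ∀ i : Fin n, volume (Set.Ioo (y i - r) (y i + r)) = ENNReal.ofReal (2*r) := by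
    intro i; rw [Real.volume_Ioo]; ring_nf
  rw [Finset.prod_congr rfl (fun i _ => this i), Finset.prod_const, Finset.card_univ,
    Fintype.card_fin, ← ENNReal.ofReal_pow (by positivity)]

lemma box_subset_ball {y : EuclideanSpace ℝ (Fin n)} {s δ : ℝ} (hn : 0 < n) (hs : 0 < s)
    (hδ : Real.sqrt n * s = δ) :
    {z : EuclideanSpace ℝ (Fin n) | ∀ i, z i ∈ Set.Ioo (y i - s) (y i + s)} ⊆ ball y δ := by
  intro z hz
  rw [mem_ball, EuclideanSpace.dist_eq]
  have hb : ∀ i, dist (z i) (y i) ^ 2 < s ^ 2 := by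
    intro i
    obtain ⟨h1, h2⟩ := hz i
    rw [Real.dist_eq]
    have h3 : |z i - y i| < s := by rw [abs_lt]; constructor <;> linarith
    nlinarith [abs_nonneg (z i - y i)]
  have hsum : (∑ i, dist (z i) (y i) ^ 2) < (n : ℝ) * s ^ 2 := by
    have := Finset.sum_lt_sum_of_nonempty (s := (Finset.univ : Finset (Fin n)))
      (by
        have : Nonempty (Fin n) := Fin.pos_iff_nonempty.mp hn
        exact Finset.univ_nonempty) (fun i _ => hb i)
    simpa [Finset.sum_const, Finset.card_univ, nsmul_eq_mul] using this
  have hfin : Real.sqrt ((n : ℝ) * s ^ 2) = δ := by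
    rw [Real.sqrt_mul (Nat.cast_nonneg n), Real.sqrt_sq hs.le, hδ]
  rw [← hfin]
  exact Real.sqrt_lt_sqrt (Finset.sum_nonneg fun i _ => sq_nonneg _) hsum

lemma rpow_half_pow {m : ℕ} (hm : 0 < m) :
    ((m : ℝ)) ^ (-(m : ℝ) / 2) = ((Real.sqrt m) ^ m)⁻¹ := by
  have h0 : (0:ℝ) ≤ m := Nat.cast_nonneg m
  rw [Real.sqrt_eq_rpow, ← Real.rpow_natCast ((m:ℝ) ^ ((1:ℝ)/2)) m, ← Real.rpow_mul h0,
    ← Real.rpow_neg h0]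
  congr 1
  push_cast
  ring

end Aux

set_option maxHeartbeats 2000000 in
theorem cover_prob_of_reach_minus_small_set {n : ℕ}
    (U : Set (EuclideanSpace ℝ (Fin n))) (hUopen : IsOpen U)
    (hUbdd : Bornology.IsBounded U)
    (ρ : ℝ) (hρ : 0 < ρ) (hreach : ENNReal.ofReal ρ < reach Uᶜ)
    (δ : ℝ) (hδ0 : 0 < δ) (hδρ : δ < ρ)
    (A : Set (EuclideanSpace ℝ (Fin n))) (hA : MeasurableSet A) (hAU : A ⊆ U)
    (hAvol : volume A < ENNReal.ofReal (δ ^ n * (n : ℝ) ^ (-(n : ℝ) / 2)))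
    {Ω : Type*} [MeasurableSpace Ω] (P : Measure Ω) [IsProbabilityMeasure P] :
    ∃ (𝓡 : Finset (Set (EuclideanSpace ℝ (Fin n)))) (M : ℕ),
      𝓡.card = M ∧
      (∀ R ∈ 𝓡, MeasurableSet R) ∧
      (∀ R ∈ 𝓡, ∀ R' ∈ 𝓡, R ≠ R' → Disjoint R R') ∧
      ⋃₀ (𝓡 : Set (Set (EuclideanSpace ℝ (Fin n)))) = U \ A ∧
      ∀ (N : ℕ) (X : Fin N → Ω → EuclideanSpace ℝ (Fin n)),
        iIndepFun X P →
        (∀ i, ∀ B : Set (EuclideanSpace ℝ (Fin n)), MeasurableSet B →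
          P (X i ⁻¹' B) = volume (B ∩ (U \ A)) / volume (U \ A)) →
        1 - (M : ℝ≥0∞) * ENNReal.ofReal (Real.exp
            (-(δ ^ n * (n : ℝ) ^ (-(n : ℝ) / 2) - (volume A).toReal) * N /
              (volume (U \ A)).toReal)) ≤
          P {ω | U \ A ⊆ ⋃ i, Metric.closedBall (X i ω) (3 * δ)} := by
  classical
  have hEmeas : MeasurableSet (U \ A) := hUopen.measurableSet.diff hA
  by_cases hEne : (U \ A).Nonempty
  swap
  · rw [Set.not_nonempty_iff_eq_empty] at hEne
    refine ⟨∅, 0, by simp, by simp, by simp, by simp [hEne], ?_⟩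
    intro N X hindep hP
    have hset : {ω | U \ A ⊆ ⋃ i, Metric.closedBall (X i ω) (3*δ)} = Set.univ := by
      ext ω; simp [hEne]
    rw [hset]
    simp
  rcases Nat.eq_zero_or_pos n with hn0 | hnpos
  · -- n = 0 : subsingleton space
    subst hn0
    have hsub : Subsingleton (EuclideanSpace ℝ (Fin 0)) := ⟨fun a b => PiLp.ext fun i => i.elim0⟩
    obtain ⟨z0, hz0⟩ := hEne
    have hEuniv : U \ A = Set.univ :=
      Set.eq_univ_of_forall fun w => by rwa [Subsingleton.elim w z0]
    refine ⟨{Set.univ}, 1, by simp, by simp, ?_, by simp [hEuniv], ?_⟩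
    · intro R hR R' hR' hne
      rw [Finset.mem_singleton] at hR hR'
      exact absurd (hR.trans hR'.symm) hne
    intro N X hindep hP
    rcases Nat.eq_zero_or_pos N with hN0 | hNpos
    · subst hN0
      have hev : {ω | U \ A ⊆ ⋃ i : Fin 0, Metric.closedBall (X i ω) (3*δ)} = (∅ : Set Ω) := by
        ext ω
        simp only [Set.mem_setOf_eq, Set.mem_empty_iff_false, iff_false]
        intro h
        have h2 := h hz0
        simp only [Set.mem_iUnion] at h2
        obtain ⟨i, -⟩ := h2
        exact i.elim0
      rw [hev, measure_empty]
      simp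
    · have hev : {ω | U \ A ⊆ ⋃ i, Metric.closedBall (X i ω) (3*δ)} = Set.univ := by
        apply Set.eq_univ_of_forall
        intro ω z hz
        refine Set.mem_iUnion.mpr ⟨⟨0, hNpos⟩, ?_⟩
        rw [mem_closedBall, Subsingleton.elim z (X ⟨0, hNpos⟩ ω), dist_self]
        positivity
      rw [hev, measure_univ]
      exact tsub_le_self.trans le_rfl
  -- main case : n ≥ 1
  set c2 : ℝ := δ ^ n * (n : ℝ) ^ (-(n : ℝ) / 2) with hc2_def
  have hc2pos : 0 < c2 := by
    rw [hc2_def]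
    exact mul_pos (pow_pos hδ0 n) (Real.rpow_pos_of_pos (by exact_mod_cast hnpos) _)
  have hUcne : (Uᶜ).Nonempty := by
    rw [Set.nonempty_iff_ne_empty]
    intro h
    have hUuniv : U = Set.univ := Set.compl_empty_iff.mp h
    obtain ⟨r, hr⟩ := hUbdd.subset_closedBall 0
    set v : EuclideanSpace ℝ (Fin n) := EuclideanSpace.single ⟨0, hnpos⟩ ((max r 0) + 1) with hv_def
    have hv : v ∈ U := by rw [hUuniv]; trivial
    have h2 := hr hv
    rw [mem_closedBall, dist_zero_right] at h2
    have hnorm : ‖v‖ = max r 0 + 1 := by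
      rw [hv_def, EuclideanSpace.norm_single, Real.norm_eq_abs, abs_of_pos]
      positivity
    rw [hnorm] at h2
    have h3 := le_max_left r 0
    linarith
  have hUnp := unp_of_reach hreach
  set s := δ / Real.sqrt n with hs_def
  have hsqn : (0:ℝ) < Real.sqrt n := Real.sqrt_pos.mpr (by exact_mod_cast hnpos)
  have hs : 0 < s := div_pos hδ0 hsqn
  have hsn : Real.sqrt n * s = δ := by rw [hs_def]; field_simp
  set K : Set (Fin n → ℤ) := {k | (cubeSet s k ∩ (U \ A)).Nonempty} with hK_def
  obtain ⟨r, hrU⟩ := hUbdd.subset_closedBall 0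
  have hKfin : K.Finite := by
    apply Set.Finite.subset
      (Set.Finite.pi (fun _ : Fin n => Set.finite_Icc (⌈(-(r+s))/s⌉ : ℤ) ⌊r/s⌋))
    rintro k ⟨z, hzc, hzE⟩
    intro i _
    have hzball := hrU hzE.1
    rw [mem_closedBall, dist_zero_right] at hzball
    have hzi : |z i| ≤ r := by
      have h1 : (z i)^2 ≤ ∑ j, (z j)^2 :=
        Finset.single_le_sum (fun j _ => sq_nonneg (z j)) (Finset.mem_univ i)
      have h2 : |z i| ≤ ‖z‖ := by
        rw [EuclideanSpace.norm_eq, ← Real.sqrt_sq_eq_abs]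
        apply Real.sqrt_le_sqrt
        simpa [Real.norm_eq_abs, sq_abs] using h1
      linarith
    obtain ⟨hk1, hk2⟩ := hzc i
    have habs := abs_le.mp hzi
    have hdistr : ((k i : ℝ)+1)*s = (k i)*s + s := by ring
    rw [Set.mem_Icc]
    constructor
    · rw [Int.ceil_le, div_le_iff₀ hs]
      linarith
    · rw [Int.le_floor]
      rw [le_div_iff₀ hs]
      linarith
  set Kfin := hKfin.toFinset with hKfin_def
  have hxk : ∀ k, k ∈ K → (cubeSet s k ∩ (U \ A)).Nonempty := fun k hk => hk
  choose! xk hxkmem using hxk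
  have hdeep : ∀ k ∈ K, ∃ y, dist (xk k) y ≤ δ ∧ ball y δ ⊆ U :=
    fun k hk => exists_deep_point hUopen hUcne hδ0 hδρ hUnp (hxkmem k hk).2.1
  choose! yk hyk1 hyk2 using hdeep
  -- volume facts
  have hvolE_ne_top : volume (U \ A) ≠ ⊤ :=
    ((measure_mono Set.diff_subset).trans_lt hUbdd.measure_lt_top).ne
  have hAfin : volume A ≠ ⊤ := (hAvol.trans ENNReal.ofReal_lt_top).ne
  have hball_vol : ∀ k, ENNReal.ofReal c2 ≤ volume (ball (yk k) δ) := by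
    intro k
    have hsub := box_subset_ball (y := yk k) hnpos hs hsn
    refine le_trans ?_ (measure_mono hsub)
    rw [box_volume _ hs]
    apply ENNReal.ofReal_le_ofReal
    rw [hc2_def, rpow_half_pow hnpos]
    have h2s : (2*s)^n = 2^n * (δ^n / (Real.sqrt n)^n) := by
      rw [hs_def, mul_pow, div_pow]
    rw [h2s]
    have h1 : δ ^ n * ((Real.sqrt n) ^ n)⁻¹ = δ^n / (Real.sqrt n)^n := by ring
    rw [h1]
    have hpos : 0 < δ^n / (Real.sqrt n)^n := by positivity
    exact le_mul_of_one_le_left hpos.le (one_le_pow₀ (by norm_num))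
  have hSmeas : ∀ k, MeasurableSet (ball (yk k) δ ∩ (U \ A)) :=
    fun k => measurableSet_ball.inter hEmeas
  have hSsubE : ∀ k, ball (yk k) δ ∩ (U \ A) ⊆ U \ A := fun k => Set.inter_subset_right
  have hSfin : ∀ k, volume (ball (yk k) δ ∩ (U \ A)) ≠ ⊤ :=
    fun k => (lt_of_le_of_lt (measure_mono (hSsubE k)) (lt_top_iff_ne_top.mpr hvolE_ne_top)).ne
  have hSvol : ∀ k ∈ K, ENNReal.ofReal c2 ≤ volume (ball (yk k) δ ∩ (U \ A)) + volume A := by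
    intro k hk
    refine le_trans (hball_vol k) ?_
    have hsplit : ball (yk k) δ ⊆ (ball (yk k) δ ∩ (U \ A)) ∪ A := by
      intro z hz
      by_cases hzA : z ∈ A
      · exact Or.inr hzA
      · exact Or.inl ⟨hz, hyk2 k hk hz, hzA⟩
    exact le_trans (measure_mono hsplit) (measure_union_le _ _)
  have hSreal : ∀ k ∈ K, c2 - (volume A).toReal ≤ (volume (ball (yk k) δ ∩ (U \ A))).toReal := by
    intro k hk
    have h := ENNReal.toReal_mono (by
        rw [← lt_top_iff_ne_top]
        exact ENNReal.add_lt_top.mpr ⟨lt_top_iff_ne_top.mpr (hSfin k), lt_top_iff_ne_top.mpr hAfin⟩)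
      (hSvol k hk)
    rw [ENNReal.toReal_ofReal hc2pos.le, ENNReal.toReal_add (hSfin k) hAfin] at h
    linarith
  have hEvol_ne : volume (U \ A) ≠ 0 := by
    obtain ⟨z0, hz0⟩ := hEne
    have hk0 : (fun i => ⌊z0 i / s⌋) ∈ K := ⟨z0, mem_cubeSet_floor hs z0, hz0⟩
    intro h0
    have hv0 : volume (ball (yk (fun i => ⌊z0 i / s⌋)) δ ∩ (U \ A)) = 0 :=
      le_antisymm (le_trans (measure_mono (hSsubE _)) h0.le) zero_le
    have h1 := hSvol _ hk0
    rw [hv0, zero_add] at h1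
    exact absurd h1 (not_le.mpr hAvol)
  have hEreal_pos : 0 < (volume (U \ A)).toReal :=
    ENNReal.toReal_pos hEvol_ne hvolE_ne_top
  -- the partition
  refine ⟨Kfin.image (fun k => cubeSet s k ∩ (U \ A)), (Kfin.image (fun k => cubeSet s k ∩ (U \ A))).card,
    rfl, ?_, ?_, ?_, ?_⟩
  · intro R hR
    obtain ⟨k, -, rfl⟩ := Finset.mem_image.mp hR
    exact (cubeSet_measurable k).inter hEmeas
  · intro R hR R' hR' hne
    obtain ⟨k, hk, rfl⟩ := Finset.mem_image.mp hR
    obtain ⟨k', hk', rfl⟩ := Finset.mem_image.mp hR'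
    rw [Set.disjoint_left]
    rintro z ⟨hz1, hz2⟩ ⟨hz1', -⟩
    have e1 := cubeSet_floor_eq hs hz1
    have e2 := cubeSet_floor_eq hs hz1'
    exact hne (by rw [e1.trans e2.symm])
  · ext z
    simp only [Set.mem_sUnion, Finset.coe_image, Set.mem_image, Finset.mem_coe]
    constructor
    · rintro ⟨t, ⟨k, hk, rfl⟩, hz⟩
      exact hz.2
    · intro hz
      refine ⟨cubeSet s (fun i => ⌊z i / s⌋) ∩ (U \ A), ⟨(fun i => ⌊z i / s⌋), ?_, rfl⟩,
        mem_cubeSet_floor hs z, hz⟩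
      rw [hKfin_def, Set.Finite.mem_toFinset]
      exact ⟨z, mem_cubeSet_floor hs z, hz⟩
  -- probability bound
  intro N X hindep hP
  set E := U \ A with hE_def
  set bound := ENNReal.ofReal (Real.exp (-(c2 - (volume A).toReal) * N / (volume E).toReal))
    with hbound_def
  have hmiss : ∀ k ∈ Kfin, P (⋂ i : Fin N, X i ⁻¹' (ball (yk k) δ ∩ E)ᶜ) ≤ bound := by
    intro k hkf
    have hk : k ∈ K := (Set.Finite.mem_toFinset _).mp hkf
    have hmeasc : MeasurableSet (ball (yk k) δ ∩ E)ᶜ := (hSmeas k).compl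
    have hiInter : (⋂ i : Fin N, X i ⁻¹' (ball (yk k) δ ∩ E)ᶜ)
        = ⋂ i ∈ Finset.univ, X i ⁻¹' (ball (yk k) δ ∩ E)ᶜ := by simp
    have hprod := (iIndepFun_iff_measure_inter_preimage_eq_mul.mp hindep) Finset.univ
      (sets := fun _ => (ball (yk k) δ ∩ E)ᶜ) (fun i _ => hmeasc)
    rw [hiInter, hprod]
    have hfac : ∀ i : Fin N, P (X i ⁻¹' (ball (yk k) δ ∩ E)ᶜ)
        ≤ ENNReal.ofReal (Real.exp (-(c2 - (volume A).toReal) / (volume E).toReal)) := by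
      intro i
      rw [hP i _ hmeasc]
      have hcap : (ball (yk k) δ ∩ E)ᶜ ∩ E = E \ (ball (yk k) δ ∩ E) := by
        rw [Set.diff_eq, Set.inter_comm]
      rw [hcap, measure_diff (hSsubE k) (hSmeas k).nullMeasurableSet (hSfin k)]
      set v := volume (ball (yk k) δ ∩ E) with hv_def
      have hvle : v ≤ volume E := measure_mono (hSsubE k)
      have htoReal : (volume E - v).toReal = (volume E).toReal - v.toReal :=
        ENNReal.toReal_sub_of_le hvle hvolE_ne_top
      have hsubfin : volume E - v ≠ ⊤ := (lt_of_le_of_lt tsub_le_self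
        (lt_top_iff_ne_top.mpr hvolE_ne_top)).ne
      have hqe : (volume E - v) / volume E
          = ENNReal.ofReal (((volume E).toReal - v.toReal) / (volume E).toReal) := by
        rw [ENNReal.ofReal_div_of_pos hEreal_pos, ← htoReal, ENNReal.ofReal_toReal hsubfin,
          ENNReal.ofReal_toReal hvolE_ne_top]
      rw [hqe]
      apply ENNReal.ofReal_le_ofReal
      have hvr : c2 - (volume A).toReal ≤ v.toReal := hSreal k hk
      have h1 : ((volume E).toReal - v.toReal) / (volume E).toReal
          = 1 - v.toReal / (volume E).toReal := by
        field_simp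
      rw [h1]
      have h2 : 1 - v.toReal / (volume E).toReal ≤ Real.exp (-(v.toReal / (volume E).toReal)) := by
        have := Real.add_one_le_exp (-(v.toReal / (volume E).toReal))
        linarith
      refine le_trans h2 (Real.exp_le_exp.mpr ?_)
      rw [neg_div, neg_le_neg_iff]
      exact (div_le_div_iff_of_pos_right hEreal_pos).mpr hvr
    calc ∏ i ∈ Finset.univ, P (X i ⁻¹' (ball (yk k) δ ∩ E)ᶜ)
        ≤ ∏ _i ∈ (Finset.univ : Finset (Fin N)),
            ENNReal.ofReal (Real.exp (-(c2 - (volume A).toReal) / (volume E).toReal)) :=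
          Finset.prod_le_prod' fun i _ => hfac i
      _ = ENNReal.ofReal (Real.exp (-(c2 - (volume A).toReal) / (volume E).toReal)) ^ N := by
          rw [Finset.prod_const, Finset.card_univ, Fintype.card_fin]
      _ = bound := by
          rw [← ENNReal.ofReal_pow (Real.exp_nonneg _), ← Real.exp_nat_mul, hbound_def]
          congr 1
          ring
  -- assemble
  set Cov := {ω | E ⊆ ⋃ i, Metric.closedBall (X i ω) (3*δ)} with hCov_def
  have hcardeq : (Kfin.image (fun k => cubeSet s k ∩ E)).card = Kfin.card := by
    apply Finset.card_image_of_injOn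
    intro k hk k' hk' heq
    have hkK : k ∈ K := by simpa [hKfin_def] using hk
    obtain ⟨z, hz⟩ := hkK
    have heq' : cubeSet s k ∩ E = cubeSet s k' ∩ E := by simpa using heq
    have hz' : z ∈ cubeSet s k' ∩ E := heq' ▸ hz
    rw [cubeSet_floor_eq hs hz.1, cubeSet_floor_eq hs hz'.1]
  have hcover : Covᶜ ⊆ ⋃ k ∈ Kfin, ⋂ i : Fin N, X i ⁻¹' (ball (yk k) δ ∩ E)ᶜ := by
    intro ω hω
    simp only [hCov_def, Set.mem_compl_iff, Set.mem_setOf_eq] at hω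
    obtain ⟨z, hzE, hz⟩ := Set.not_subset.mp hω
    have hkK : (fun i => ⌊z i / s⌋) ∈ K := ⟨z, mem_cubeSet_floor hs z, hzE⟩
    refine Set.mem_biUnion ((Set.Finite.mem_toFinset _).mpr hkK) ?_
    refine Set.mem_iInter.mpr fun i => ?_
    simp only [Set.mem_preimage, Set.mem_compl_iff]
    intro hXi
    apply hz
    refine Set.mem_iUnion.mpr ⟨i, ?_⟩
    rw [mem_closedBall]
    have hd1 : dist z (xk (fun i => ⌊z i / s⌋)) ≤ Real.sqrt n * s :=
      cubeSet_dist hs (mem_cubeSet_floor hs z) (hxkmem _ hkK).1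
    rw [hsn] at hd1
    have hd2 : dist (xk (fun i => ⌊z i / s⌋)) (yk (fun i => ⌊z i / s⌋)) ≤ δ := hyk1 _ hkK
    have hd3 : dist (yk (fun i => ⌊z i / s⌋)) (X i ω) < δ := by
      have := hXi.1
      rw [mem_ball] at this
      rw [dist_comm]
      exact this
    calc dist z (X i ω) ≤ dist z (yk (fun i => ⌊z i / s⌋)) + dist (yk (fun i => ⌊z i / s⌋)) (X i ω) :=
          dist_triangle _ _ _
      _ ≤ (dist z (xk (fun i => ⌊z i / s⌋)) + dist (xk (fun i => ⌊z i / s⌋)) (yk (fun i => ⌊z i / s⌋)))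
          + dist (yk (fun i => ⌊z i / s⌋)) (X i ω) := by
            gcongr
            exact dist_triangle _ _ _
      _ ≤ 3 * δ := by linarith
  have hstep1 : P Covᶜ ≤ ((Kfin.image (fun k => cubeSet s k ∩ E)).card : ℝ≥0∞) * bound := by
    refine le_trans (measure_mono hcover) ?_
    refine le_trans (measure_biUnion_finset_le _ _) ?_
    refine le_trans (Finset.sum_le_sum fun k hk => hmiss k hk) ?_
    rw [Finset.sum_const, hcardeq, nsmul_eq_mul]
  have hstep2 : (1:ℝ≥0∞) ≤ P Cov + P Covᶜ := by
    rw [← measure_univ (μ := P)]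
    refine le_trans (measure_mono ?_) (measure_union_le _ _)
    rw [Set.union_compl_self]
  calc 1 - ((Kfin.image (fun k => cubeSet s k ∩ E)).card : ℝ≥0∞) * bound
      ≤ 1 - P Covᶜ := tsub_le_tsub_left hstep1 1
    _ ≤ P Cov := tsub_le_iff_right.mpr hstep2
end

section
/- Let A, B ⊆ ℝⁿ be sets of finite perimeter with H^{n-1}(∂_*A ∩ ∂_*B) = 0. Then H^{n-1}(∂_*(A ∪ B)) = H^{n-1}(∂_*A ∩ B^o_*) + H^{n-1}(∂_*B ∩ A^o_*), and H^{n-1}(∂_*(A ∩ B)) = H^{n-1}(∂_*A ∩ B^i_*) + H^{n-1}(∂_*B ∩ A^i_*). -/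
open MeasureTheory Metric Set Filter
open scoped ENNReal Topology

variable {n : ℕ}

/-- Upper density of `A` at `x` (with normalization `rⁿ`). -/
noncomputable def upperDens (A : Set (EuclideanSpace ℝ (Fin n)))
    (x : EuclideanSpace ℝ (Fin n)) : ℝ≥0∞ :=
  Filter.limsup (fun r : ℝ => volume (Metric.ball x r ∩ A) / ENNReal.ofReal (r ^ n)) (𝓝[>] 0)

/-- Measure-theoretic boundary `∂_* A`. -/
def mtBoundary (A : Set (EuclideanSpace ℝ (Fin n))) : Set (EuclideanSpace ℝ (Fin n)) :=
  {x | 0 < upperDens A x ∧ 0 < upperDens Aᶜ x}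

/-- Measure-theoretic interior `A^i_*`. -/
def mtInterior (A : Set (EuclideanSpace ℝ (Fin n))) : Set (EuclideanSpace ℝ (Fin n)) :=
  {x | upperDens Aᶜ x = 0}

/-- Measure-theoretic exterior `A^o_*`. -/
def mtExterior (A : Set (EuclideanSpace ℝ (Fin n))) : Set (EuclideanSpace ℝ (Fin n)) :=
  {x | upperDens A x = 0}

/-! ### Auxiliary lemmas -/

/-- `x ↦ volume (ball x r ∩ A)` is lower semicontinuous. -/
lemma lsc_vol_ball_inter (A : Set (EuclideanSpace ℝ (Fin n))) (r : ℝ) :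
    LowerSemicontinuous (fun x : EuclideanSpace ℝ (Fin n) => volume (Metric.ball x r ∩ A)) := by
  intro x y hy
  have hmono : Monotone (fun k : ℕ => Metric.ball x (r - 1 / (k + 1)) ∩ A) := by
    intro k l hkl
    refine inter_subset_inter (Metric.ball_subset_ball ?_) Subset.rfl
    have h1 : (1 : ℝ) / (l + 1) ≤ 1 / (k + 1) := by
      apply one_div_le_one_div_of_le
      · positivity
      · exact_mod_cast by omega
    linarith
  have hunion : Metric.ball x r ∩ A = ⋃ k : ℕ, (Metric.ball x (r - 1 / (k + 1)) ∩ A) := by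
    ext z
    simp only [mem_iUnion, mem_inter_iff, Metric.mem_ball]
    constructor
    · rintro ⟨hz, hzA⟩
      obtain ⟨k, hk⟩ := exists_nat_one_div_lt (show (0 : ℝ) < r - dist z x by linarith)
      exact ⟨k, by push_cast; push_cast at hk; linarith, hzA⟩
    · rintro ⟨k, hz, hzA⟩
      have : (0 : ℝ) < 1 / (k + 1) := by positivity
      exact ⟨by linarith, hzA⟩
  change y < volume (Metric.ball x r ∩ A) at hy
  rw [hunion, hmono.directed_le.measure_iUnion] at hy
  obtain ⟨k, hk⟩ := lt_iSup_iff.mp hy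
  have hpos : (0 : ℝ) < 1 / (k + 1) := by positivity
  filter_upwards [Metric.ball_mem_nhds x hpos] with x' hx'
  refine hk.trans_le (measure_mono (inter_subset_inter ?_ Subset.rfl))
  intro z hz
  rw [Metric.mem_ball] at hz ⊢
  rw [Metric.mem_ball, dist_comm] at hx'
  calc dist z x' ≤ dist z x + dist x x' := dist_triangle _ _ _
    _ < (r - 1 / (k + 1)) + 1 / (k + 1) := by apply add_lt_add hz hx'
    _ = r := by ring

lemma lsc_densFun (A : Set (EuclideanSpace ℝ (Fin n))) (r : ℝ) :
    LowerSemicontinuous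
      (fun x : EuclideanSpace ℝ (Fin n) =>
        volume (Metric.ball x r ∩ A) / ENNReal.ofReal (r ^ n)) := by
  rcases le_or_gt r 0 with hr | hr
  · have : ∀ x : EuclideanSpace ℝ (Fin n),
        volume (Metric.ball x r ∩ A) / ENNReal.ofReal (r ^ n) = 0 := by
      intro x
      rw [Metric.ball_eq_empty.mpr hr, empty_inter, measure_empty, ENNReal.zero_div]
    simp only [this]
    exact lowerSemicontinuous_const
  · have hc : ENNReal.ofReal (r ^ n) ≠ 0 := by
      simp only [ne_eq, ENNReal.ofReal_eq_zero, not_le]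
      positivity
    exact (ENNReal.continuous_div_const _ hc).comp_lowerSemicontinuous
      (lsc_vol_ball_inter A r) (fun a b hab => ENNReal.div_le_div hab le_rfl)

lemma upperDens_eq_iInf (A : Set (EuclideanSpace ℝ (Fin n))) (x : EuclideanSpace ℝ (Fin n)) :
    upperDens A x = ⨅ k : ℕ, ⨆ r ∈ Ioo (0 : ℝ) (1 / (k + 1)),
      volume (Metric.ball x r ∩ A) / ENNReal.ofReal (r ^ n) := by
  rw [upperDens, (nhdsGT_basis (0 : ℝ)).limsup_eq_iInf_iSup]
  apply le_antisymm
  · refine le_iInf fun k => ?_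
    exact iInf₂_le (1 / (k + 1 : ℝ)) (by positivity)
  · refine le_iInf₂ fun ε hε => ?_
    obtain ⟨k, hk⟩ := exists_nat_one_div_lt hε
    refine (iInf_le _ k).trans ?_
    refine iSup_le fun r => iSup_le fun hr => ?_
    have hmem : r ∈ Ioo (0 : ℝ) ε := ⟨hr.1, hr.2.trans hk⟩
    exact le_iSup₂ (f := fun r (_ : r ∈ Ioo (0 : ℝ) ε) =>
      volume (Metric.ball x r ∩ A) / ENNReal.ofReal (r ^ n)) r hmem

lemma upperDens_measurable (A : Set (EuclideanSpace ℝ (Fin n))) :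
    Measurable (upperDens A) := by
  have h : upperDens A = fun x => ⨅ k : ℕ, ⨆ r ∈ Ioo (0 : ℝ) (1 / (k + 1)),
      volume (Metric.ball x r ∩ A) / ENNReal.ofReal (r ^ n) := by
    funext x; exact upperDens_eq_iInf A x
  rw [h]
  refine Measurable.iInf fun k => ?_
  exact (lowerSemicontinuous_biSup fun r _ => lsc_densFun A r).measurable

lemma upperDens_mono {A B : Set (EuclideanSpace ℝ (Fin n))} (h : A ⊆ B)
    (x : EuclideanSpace ℝ (Fin n)) : upperDens A x ≤ upperDens B x := by
  refine limsup_le_limsup (Eventually.of_forall fun r => ?_)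
  exact ENNReal.div_le_div (measure_mono (inter_subset_inter Subset.rfl h)) le_rfl

lemma ennreal_limsup_add_le {ι : Type*} (f : Filter ι) (u v : ι → ℝ≥0∞) :
    Filter.limsup (fun i => u i + v i) f ≤ Filter.limsup u f + Filter.limsup v f := by
  rcases f.eq_or_neBot with rfl | hne
  · simp [Filter.limsup_bot]
  by_cases hu : Filter.limsup u f = ⊤
  · simp [hu]
  by_cases hv : Filter.limsup v f = ⊤
  · simp [hv]
  refine ENNReal.le_of_forall_pos_le_add fun ε hε _ => ?_
  have hε2 : (ε : ℝ≥0∞) / 2 ≠ 0 := by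
    simp [ENNReal.div_eq_zero_iff, hε.ne']
  have h1 : Filter.limsup u f < Filter.limsup u f + ε / 2 :=
    ENNReal.lt_add_right hu hε2
  have h2 : Filter.limsup v f < Filter.limsup v f + ε / 2 :=
    ENNReal.lt_add_right hv hε2
  calc Filter.limsup (fun i => u i + v i) f
      ≤ Filter.limsup (fun _ => Filter.limsup u f + ε / 2 + (Filter.limsup v f + ε / 2)) f := by
        refine limsup_le_limsup ?_
        filter_upwards [eventually_lt_of_limsup_lt h1, eventually_lt_of_limsup_lt h2]
          with i hi1 hi2
        exact add_le_add hi1.le hi2.le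
    _ = Filter.limsup u f + ε / 2 + (Filter.limsup v f + ε / 2) := limsup_const _
    _ = Filter.limsup u f + Filter.limsup v f + ε := by
        rw [add_add_add_comm, ENNReal.add_halves]

lemma upperDens_union_le (A B : Set (EuclideanSpace ℝ (Fin n)))
    (x : EuclideanSpace ℝ (Fin n)) :
    upperDens (A ∪ B) x ≤ upperDens A x + upperDens B x := by
  refine le_trans (limsup_le_limsup (Eventually.of_forall fun r => ?_))
    (ennreal_limsup_add_le _ _ _)
  rw [ENNReal.div_add_div_same]
  refine ENNReal.div_le_div ?_ le_rfl
  rw [inter_union_distrib_left]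
  exact measure_union_le _ _

/-- The key splitting lemma. -/
lemma measure_eq_add_of_separated {α : Type*} [MeasurableSpace α] (μ : Measure α)
    {S T W N E : Set α} (hST : S ∪ T ⊆ W) (hW : W ⊆ S ∪ T ∪ N) (hN : μ N = 0)
    (hE : MeasurableSet E) (hSE : S ⊆ E) (hTE : T ⊆ Eᶜ) : μ W = μ S + μ T := by
  have h1 : μ W = μ (S ∪ T) := by
    apply le_antisymm
    · calc μ W ≤ μ (S ∪ T ∪ N) := measure_mono hW
        _ ≤ μ (S ∪ T) + μ N := measure_union_le _ _
        _ = μ (S ∪ T) := by rw [hN, add_zero]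
    · exact measure_mono hST
  have hSe : (S ∪ T) ∩ E = S := by
    ext x
    constructor
    · rintro ⟨hx | hx, hxE⟩
      · exact hx
      · exact absurd hxE (hTE hx)
    · intro hx
      exact ⟨Or.inl hx, hSE hx⟩
  have hTe : (S ∪ T) \ E = T := by
    ext x
    constructor
    · rintro ⟨hx | hx, hxE⟩
      · exact absurd (hSE hx) hxE
      · exact hx
    · intro hx
      exact ⟨Or.inr hx, hTE hx⟩
  rw [h1, ← measure_inter_add_diff (S ∪ T) hE, hSe, hTe]

theorem hausdorff_boundary_union_inter
    (A B : Set (EuclideanSpace ℝ (Fin n)))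
    (hA : MeasurableSet A) (hB : MeasurableSet B)
    (hPerA : μH[(n : ℝ) - 1] (mtBoundary A) < ⊤)
    (hPerB : μH[(n : ℝ) - 1] (mtBoundary B) < ⊤)
    (hnull : μH[(n : ℝ) - 1] (mtBoundary A ∩ mtBoundary B) = 0) :
    μH[(n : ℝ) - 1] (mtBoundary (A ∪ B)) =
        μH[(n : ℝ) - 1] (mtBoundary A ∩ mtExterior B) +
          μH[(n : ℝ) - 1] (mtBoundary B ∩ mtExterior A) ∧
      μH[(n : ℝ) - 1] (mtBoundary (A ∩ B)) =
        μH[(n : ℝ) - 1] (mtBoundary A ∩ mtInterior B) +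
          μH[(n : ℝ) - 1] (mtBoundary B ∩ mtInterior A) := by
  constructor
  · -- union case
    refine measure_eq_add_of_separated _ ?_ ?_ hnull
      ((upperDens_measurable B) (measurableSet_singleton 0)) inter_subset_right ?_
    · -- S ∪ T ⊆ ∂(A ∪ B)
      rintro x (⟨⟨hA1, hA2⟩, hB0⟩ | ⟨⟨hB1, hB2⟩, hA0⟩)
      · refine ⟨hA1.trans_le (upperDens_mono subset_union_left x), ?_⟩
        have hsub : Aᶜ ⊆ (A ∪ B)ᶜ ∪ B := by
          intro z hz
          by_cases hzB : z ∈ B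
          · exact Or.inr hzB
          · exact Or.inl (by simp only [compl_union, mem_inter_iff]; exact ⟨hz, hzB⟩)
        have := (upperDens_mono hsub x).trans (upperDens_union_le _ _ x)
        rw [show upperDens B x = 0 from hB0, add_zero] at this
        exact hA2.trans_le this
      · refine ⟨hB1.trans_le (upperDens_mono subset_union_right x), ?_⟩
        have hsub : Bᶜ ⊆ (A ∪ B)ᶜ ∪ A := by
          intro z hz
          by_cases hzA : z ∈ A
          · exact Or.inr hzA
          · exact Or.inl (by simp only [compl_union, mem_inter_iff]; exact ⟨hzA, hz⟩)
        have := (upperDens_mono hsub x).trans (upperDens_union_le _ _ x)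
        rw [show upperDens A x = 0 from hA0, add_zero] at this
        exact hB2.trans_le this
    · -- ∂(A ∪ B) ⊆ S ∪ T ∪ N
      rintro x ⟨h1, h2⟩
      have hAc : 0 < upperDens Aᶜ x := by
        refine lt_of_lt_of_le h2 (upperDens_mono ?_ x)
        rw [compl_union]; exact inter_subset_left
      have hBc : 0 < upperDens Bᶜ x := by
        refine lt_of_lt_of_le h2 (upperDens_mono ?_ x)
        rw [compl_union]; exact inter_subset_right
      have hor : 0 < upperDens A x ∨ 0 < upperDens B x := by
        by_contra hcon
        push_neg at hcon
        have e1 : upperDens A x = 0 := le_antisymm hcon.1 (zero_le)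
        have e2 : upperDens B x = 0 := le_antisymm hcon.2 (zero_le)
        have := h1.trans_le (upperDens_union_le A B x)
        rw [e1, e2, add_zero] at this
        exact lt_irrefl _ this
      rcases hor with hApos | hBpos
      · by_cases hBpos : 0 < upperDens B x
        · exact Or.inr ⟨⟨hApos, hAc⟩, ⟨hBpos, hBc⟩⟩
        · exact Or.inl (Or.inl ⟨⟨hApos, hAc⟩, le_antisymm (not_lt.mp hBpos) (zero_le)⟩)
      · by_cases hApos : 0 < upperDens A x
        · exact Or.inr ⟨⟨hApos, hAc⟩, ⟨hBpos, hBc⟩⟩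
        · exact Or.inl (Or.inr ⟨⟨hBpos, hBc⟩, le_antisymm (not_lt.mp hApos) (zero_le)⟩)
    · -- T ⊆ Eᶜ
      rintro x ⟨⟨hB1, _⟩, _⟩
      simp only [mem_compl_iff, mem_preimage, mem_singleton_iff]
      exact hB1.ne'
  · -- intersection case
    refine measure_eq_add_of_separated _ ?_ ?_ hnull
      ((upperDens_measurable Bᶜ) (measurableSet_singleton 0)) inter_subset_right ?_
    · -- S' ∪ T' ⊆ ∂(A ∩ B)
      rintro x (⟨⟨hA1, hA2⟩, hB0⟩ | ⟨⟨hB1, hB2⟩, hA0⟩)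
      · constructor
        · have hsub : A ⊆ (A ∩ B) ∪ Bᶜ := by
            intro z hz
            by_cases hzB : z ∈ B
            · exact Or.inl ⟨hz, hzB⟩
            · exact Or.inr hzB
          have := (upperDens_mono hsub x).trans (upperDens_union_le _ _ x)
          rw [show upperDens Bᶜ x = 0 from hB0, add_zero] at this
          exact hA1.trans_le this
        · refine hA2.trans_le (upperDens_mono ?_ x)
          rw [compl_inter]; exact subset_union_left
      · constructor
        · have hsub : B ⊆ (A ∩ B) ∪ Aᶜ := by
            intro z hz
            by_cases hzA : z ∈ A
            · exact Or.inl ⟨hzA, hz⟩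
            · exact Or.inr hzA
          have := (upperDens_mono hsub x).trans (upperDens_union_le _ _ x)
          rw [show upperDens Aᶜ x = 0 from hA0, add_zero] at this
          exact hB1.trans_le this
        · refine hB2.trans_le (upperDens_mono ?_ x)
          rw [compl_inter]; exact subset_union_right
    · -- ∂(A ∩ B) ⊆ S' ∪ T' ∪ N
      rintro x ⟨h1, h2⟩
      have hApos : 0 < upperDens A x :=
        h1.trans_le (upperDens_mono inter_subset_left x)
      have hBpos : 0 < upperDens B x :=
        h1.trans_le (upperDens_mono inter_subset_right x)
      have hor : 0 < upperDens Aᶜ x ∨ 0 < upperDens Bᶜ x := by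
        by_contra hcon
        push_neg at hcon
        have e1 : upperDens Aᶜ x = 0 := le_antisymm hcon.1 (zero_le)
        have e2 : upperDens Bᶜ x = 0 := le_antisymm hcon.2 (zero_le)
        have h2' : 0 < upperDens (Aᶜ ∪ Bᶜ) x := by
          refine h2.trans_le (le_of_eq ?_)
          rw [compl_inter]
        have := h2'.trans_le (upperDens_union_le Aᶜ Bᶜ x)
        rw [e1, e2, add_zero] at this
        exact lt_irrefl _ this
      rcases hor with hAc | hBc
      · by_cases hBc : 0 < upperDens Bᶜ x
        · exact Or.inr ⟨⟨hApos, hAc⟩, ⟨hBpos, hBc⟩⟩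
        · exact Or.inl (Or.inl ⟨⟨hApos, hAc⟩, le_antisymm (not_lt.mp hBc) (zero_le)⟩)
      · by_cases hAc : 0 < upperDens Aᶜ x
        · exact Or.inr ⟨⟨hApos, hAc⟩, ⟨hBpos, hBc⟩⟩
        · exact Or.inl (Or.inr ⟨⟨hBpos, hBc⟩, le_antisymm (not_lt.mp hAc) (zero_le)⟩)
    · -- T' ⊆ E'ᶜ
      rintro x ⟨⟨_, hB2⟩, _⟩
      simp only [mem_compl_iff, mem_preimage, mem_singleton_iff]
      exact hB2.ne'
end

section
/- Let E ⊆ ℝⁿ be bounded open with vol(E) > 0, let α ∈ (0,1), let A ⊆ E be measurable with vol(A) ≥ (1 - α)·vol(E), and suppose A admits a finite measurable partition 𝓡_A of cardinality M with vol(R) ≥ ε and diam(R) ≤ δ for all R ∈ 𝓡_A. Then for i.i.d. uniform samples X₁,…,X_N from E, P( vol(B(𝕏, δ) ∩ E)/vol(E) ≥ 1 - α ) ≥ 1 - M·exp(-ε·N / vol(E)). -/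
open MeasureTheory Metric Set ProbabilityTheory
open scoped ENNReal

theorem almost_cover_prob_of_almost_partition {n : ℕ}
    (E : Set (EuclideanSpace ℝ (Fin n))) (hEopen : IsOpen E)
    (hEbdd : Bornology.IsBounded E) (hEpos : 0 < volume E)
    (α : ℝ) (hα : α ∈ Set.Ioo (0 : ℝ) 1)
    (A : Set (EuclideanSpace ℝ (Fin n))) (hAmeas : MeasurableSet A) (hAE : A ⊆ E)
    (hAvol : ENNReal.ofReal (1 - α) * volume E ≤ volume A)
    (ε δ : ℝ) (hε : 0 < ε) (hδ : 0 < δ)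
    (𝓡 : Finset (Set (EuclideanSpace ℝ (Fin n)))) (M : ℕ) (hM : 𝓡.card = M)
    (hmeas : ∀ R ∈ 𝓡, MeasurableSet R)
    (hdisj : ∀ R ∈ 𝓡, ∀ R' ∈ 𝓡, R ≠ R' → Disjoint R R')
    (hcover : ⋃₀ (𝓡 : Set (Set (EuclideanSpace ℝ (Fin n)))) = A)
    (hvol : ∀ R ∈ 𝓡, ENNReal.ofReal ε ≤ volume R)
    (hdiam : ∀ R ∈ 𝓡, Metric.diam R ≤ δ)
    {Ω : Type*} [MeasurableSpace Ω] (P : Measure Ω) [IsProbabilityMeasure P]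
    (N : ℕ) (X : Fin N → Ω → EuclideanSpace ℝ (Fin n))
    (hindep : iIndepFun X P)
    (hunif : ∀ i, ∀ B : Set (EuclideanSpace ℝ (Fin n)), MeasurableSet B →
      P (X i ⁻¹' B) = volume (B ∩ E) / volume E) :
    1 - (M : ℝ≥0∞) * ENNReal.ofReal (Real.exp (-ε * N / (volume E).toReal)) ≤
      P {ω | ENNReal.ofReal (1 - α) * volume E ≤
        volume ((⋃ i, Metric.closedBall (X i ω) δ) ∩ E)} := by
  classical
  have hveT : volume E ≠ ⊤ := hEbdd.measure_lt_top.ne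
  have hve0 : volume E ≠ 0 := hEpos.ne'
  set v : ℝ := (volume E).toReal with hv
  have hv0 : 0 < v := ENNReal.toReal_pos hve0 hveT
  have hRsub : ∀ R ∈ 𝓡, R ⊆ E := by
    intro R hR
    refine Subset.trans ?_ hAE
    rw [← hcover]; exact subset_sUnion_of_mem hR
  -- bound the probability that a given piece misses all samples
  have key : ∀ R ∈ 𝓡, P (⋂ i, X i ⁻¹' Rᶜ) ≤ ENNReal.ofReal (Real.exp (-ε * N / v)) := by
    intro R hR
    have hRm := hmeas R hR
    have hprod : P (⋂ i, X i ⁻¹' Rᶜ) = ∏ i : Fin N, P (X i ⁻¹' Rᶜ) := by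
      have := hindep.measure_inter_preimage_eq_mul Finset.univ
        (sets := fun _ => Rᶜ) (fun i _ => hRm.compl)
      simpa using this
    have hq : ∀ i : Fin N, P (X i ⁻¹' Rᶜ) = (volume E - volume R) / volume E := by
      intro i
      rw [hunif i Rᶜ hRm.compl]
      congr 1
      have : Rᶜ ∩ E = E \ R := by ext x; simp [Set.mem_diff, and_comm]
      rw [this, measure_diff (hRsub R hR) hRm.nullMeasurableSet
        (lt_of_le_of_lt (measure_mono (hRsub R hR)) hveT.lt_top).ne]
    have hqle : (volume E - volume R) / volume E ≤ ENNReal.ofReal (Real.exp (-ε / v)) := by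
      have h1 : volume E - volume R ≤ ENNReal.ofReal (v - ε) := by
        have : ENNReal.ofReal (v - ε) = ENNReal.ofReal v - ENNReal.ofReal ε :=
          ENNReal.ofReal_sub v hε.le
        rw [this, hv, ENNReal.ofReal_toReal hveT]
        exact tsub_le_tsub_left (hvol R hR) _
      calc (volume E - volume R) / volume E ≤ ENNReal.ofReal (v - ε) / volume E :=
            ENNReal.div_le_div_right h1 _
        _ = ENNReal.ofReal (v - ε) / ENNReal.ofReal v := by rw [hv, ENNReal.ofReal_toReal hveT]
        _ = ENNReal.ofReal ((v - ε) / v) := (ENNReal.ofReal_div_of_pos hv0).symm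
        _ ≤ ENNReal.ofReal (Real.exp (-ε / v)) := by
            apply ENNReal.ofReal_le_ofReal
            rw [sub_div, div_self hv0.ne', neg_div]
            have := Real.add_one_le_exp (-(ε / v))
            linarith
    calc P (⋂ i, X i ⁻¹' Rᶜ) = ∏ i : Fin N, P (X i ⁻¹' Rᶜ) := hprod
      _ = ((volume E - volume R) / volume E) ^ N := by
          simp only [hq, Finset.prod_const, Finset.card_univ, Fintype.card_fin]
      _ ≤ ENNReal.ofReal (Real.exp (-ε / v)) ^ N := pow_le_pow_left' hqle N
      _ = ENNReal.ofReal (Real.exp (-ε / v) ^ N) :=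
          (ENNReal.ofReal_pow (Real.exp_nonneg _) N).symm
      _ = ENNReal.ofReal (Real.exp (-ε * N / v)) := by
          rw [← Real.exp_nat_mul]
          congr 1
          ring
  -- the bad event and the union bound
  set bad : Set Ω := ⋃ R ∈ 𝓡, ⋂ i, X i ⁻¹' Rᶜ with hbad
  have hbadle : P bad ≤ (M : ℝ≥0∞) * ENNReal.ofReal (Real.exp (-ε * N / v)) := by
    calc P bad ≤ ∑ R ∈ 𝓡, P (⋂ i, X i ⁻¹' Rᶜ) := measure_biUnion_finset_le 𝓡 _
      _ ≤ ∑ _R ∈ 𝓡, ENNReal.ofReal (Real.exp (-ε * N / v)) :=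
          Finset.sum_le_sum key
      _ = (M : ℝ≥0∞) * ENNReal.ofReal (Real.exp (-ε * N / v)) := by
          rw [Finset.sum_const, hM, nsmul_eq_mul]
  -- the complement of bad is contained in the target event
  set good : Set Ω := {ω | ENNReal.ofReal (1 - α) * volume E ≤
      volume ((⋃ i, Metric.closedBall (X i ω) δ) ∩ E)} with hgood
  have hsub : goodᶜ ⊆ bad := by
    intro ω hω
    by_contra hωbad
    apply hω
    have hhit : ∀ R ∈ 𝓡, ∃ i, X i ω ∈ R := by
      intro R hR
      by_contra hmiss
      push_neg at hmiss
      exact hωbad (Set.mem_biUnion hR (Set.mem_iInter.2 fun i => hmiss i))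
    have hAsub : A ⊆ ⋃ i, Metric.closedBall (X i ω) δ := by
      intro x hx
      rw [← hcover] at hx
      obtain ⟨R, hR, hxR⟩ := hx
      obtain ⟨i, hi⟩ := hhit R hR
      refine Set.mem_iUnion.2 ⟨i, ?_⟩
      have hbR : Bornology.IsBounded R := hEbdd.subset (hRsub R hR)
      have : dist x (X i ω) ≤ Metric.diam R := Metric.dist_le_diam_of_mem hbR hxR hi
      exact Metric.mem_closedBall.2 (this.trans (hdiam R hR))
    show ENNReal.ofReal (1 - α) * volume E ≤
        volume ((⋃ i, Metric.closedBall (X i ω) δ) ∩ E)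
    refine hAvol.trans (measure_mono ?_)
    exact Set.subset_inter hAsub hAE
  -- conclude
  rw [tsub_le_iff_right]
  calc (1 : ℝ≥0∞) = P Set.univ := (measure_univ).symm
    _ ≤ P good + P goodᶜ := by
        rw [← Set.union_compl_self good] ; exact measure_union_le _ _
    _ ≤ P good + P bad := add_le_add le_rfl (measure_mono hsub)
    _ ≤ P good + (M : ℝ≥0∞) * ENNReal.ofReal (Real.exp (-ε * N / v)) :=
        add_le_add le_rfl hbadle
end
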